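/- arXiv:1005.4049 — 6 statements merged into one kernel-verified Lean document; each statement's English description precedes it below -/
import Mathlib

section
/- Let k ≥ 1, let Q1 and Q2 be positive definite integral quadratic forms in k variables, let 0 < λ < 1, and let 1 ≤ p, q < ∞. If there exists a constant A such that ‖J_{Q1,Q2,λ} f‖_{ℓ^q} ≤ A ‖f‖_{ℓ^p} for every finitely supported f : ℤ^k × ℤ → ℂ, then 1/q ≤ 1/p − (k/(k+2))(1−λ). -/
open Matrix MeasureTheory
open scoped NNReal ENNReal

noncomputable section

lemma cast_quad {k : ℕ} (A : Matrix (Fin k) (Fin k) ℤ) (m : Fin k → ℤ) :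
    ((m ⬝ᵥ A.mulVec m : ℤ) : ℝ)
      = (fun i => (m i : ℝ)) ⬝ᵥ (A.map ((↑) : ℤ → ℝ)).mulVec (fun i => (m i : ℝ)) := by
  simp only [dotProduct, mulVec, Matrix.map_apply, Finset.mul_sum]
  push_cast
  ring

lemma quad_pos {k : ℕ} (A : Matrix (Fin k) (Fin k) ℤ)
    (hA : (A.map ((↑) : ℤ → ℝ)).PosDef) (Q : (Fin k → ℤ) → ℤ)
    (hQ : ∀ x, 2 * Q x = x ⬝ᵥ A.mulVec x) (m : Fin k → ℤ) (hm : m ≠ 0) :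
    1 ≤ Q m := by
  have hmr : (fun i => (m i : ℝ)) ≠ 0 := by
    obtain ⟨i, hi⟩ := Function.ne_iff.mp hm
    exact Function.ne_iff.mpr ⟨i, by simpa using hi⟩
  have h := hA.dotProduct_mulVec_pos hmr
  rw [star_trivial] at h
  rw [← cast_quad, ← hQ] at h
  have : 0 < 2 * Q m := by exact_mod_cast h
  omega

lemma quad_bound {k : ℕ} (A : Matrix (Fin k) (Fin k) ℤ) (m : Fin k → ℤ) (N : ℤ)
    (hN : 0 ≤ N) (hm : ∀ i, |m i| ≤ N) :
    |m ⬝ᵥ A.mulVec m| ≤ (∑ i, ∑ j, |A i j|) * N ^ 2 := by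
  have h1 : m ⬝ᵥ A.mulVec m = ∑ i, ∑ j, m i * (A i j * m j) := by
    simp [dotProduct, mulVec, Finset.mul_sum]
  rw [h1]
  calc |∑ i, ∑ j, m i * (A i j * m j)| ≤ ∑ i, ∑ j, |m i * (A i j * m j)| := by
        refine (Finset.abs_sum_le_sum_abs _ _).trans ?_
        exact Finset.sum_le_sum fun i _ => Finset.abs_sum_le_sum_abs _ _
    _ ≤ ∑ i, ∑ j, |A i j| * N ^ 2 := by
        refine Finset.sum_le_sum fun i _ => Finset.sum_le_sum fun j _ => ?_
        rw [abs_mul, abs_mul]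
        have hmm : |m i| * |m j| ≤ N * N :=
          mul_le_mul (hm i) (hm j) (abs_nonneg _) hN
        calc |m i| * (|A i j| * |m j|) = |A i j| * (|m i| * |m j|) := by ring
          _ ≤ |A i j| * (N * N) := mul_le_mul_of_nonneg_left hmm (abs_nonneg _)
          _ = |A i j| * N ^ 2 := by ring
    _ = (∑ i, ∑ j, |A i j|) * N ^ 2 := by rw [Finset.sum_mul]; simp [Finset.sum_mul]

lemma exp_le_zero {e K : ℝ} (h : ∀ N : ℕ, 1 ≤ N → (N : ℝ) ^ e ≤ K) : e ≤ 0 := by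
  by_contra he
  push_neg at he
  set K' := max K 1 with hK'
  have hK1 : (1:ℝ) ≤ K' := le_max_right _ _
  obtain ⟨N, hN⟩ := exists_nat_gt (K' ^ (1 / e))
  set M := max N 1 with hM
  have hMN : (N:ℝ) ≤ (M:ℝ) := by exact_mod_cast le_max_left N 1
  have hlt : K' ^ (1 / e) < (M:ℝ) := lt_of_lt_of_le hN hMN
  have h2 : K' ^ ((1 / e) * e) < (M:ℝ) ^ e := by
    rw [Real.rpow_mul (by positivity)]
    exact Real.rpow_lt_rpow (by positivity) hlt he
  rw [one_div, inv_mul_cancel₀ he.ne', Real.rpow_one] at h2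
  have h3 := h M (le_max_right N 1)
  have h4 : K' < K := h2.trans_le h3
  have h5 : K ≤ K' := le_max_left K 1
  linarith

lemma eLpNorm_finset_indicator {α : Type*} [DecidableEq α] [MeasurableSpace α]
    [MeasurableSingletonClass α] (F : Finset α) (p : ℝ) (hp : 1 ≤ p) :
    eLpNorm (fun x => if x ∈ F then (1:ℂ) else 0) (ENNReal.ofReal p) Measure.count
      = (F.card : ℝ≥0∞) ^ (1 / p) := by
  classical
  have hp0 : (0:ℝ) < p := by linarith
  rw [eLpNorm_eq_lintegral_rpow_enorm_toReal (by simp [ENNReal.ofReal_eq_zero]; linarith) (by simp),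
    lintegral_count,
    ENNReal.toReal_ofReal hp0.le]
  have h : ∀ x, (‖if x ∈ F then (1:ℂ) else 0‖ₑ) ^ p = if x ∈ F then 1 else 0 := by
    intro x; split <;> simp [ENNReal.zero_rpow_of_pos hp0]
  simp only [h]
  rw [tsum_eq_sum (s := F) (by intro x hx; simp [hx])]
  have hs : ∑ x ∈ F, (if x ∈ F then (1:ℝ≥0∞) else 0) = F.card := by
    rw [Finset.sum_congr rfl (fun x hx => if_pos hx)]; simp
  rw [hs]

set_option maxHeartbeats 2000000 in
/-- necessity of condition (i) for `(ℓ^p, ℓ^q)` boundedness of `J_{Q₁,Q₂,λ}`. -/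
theorem discrete_fractional_radon_necessary_i
    (k : ℕ) (hk : 1 ≤ k)
    (A₁ A₂ : Matrix (Fin k) (Fin k) ℤ)
    (hA₁symm : A₁.IsSymm) (hA₂symm : A₂.IsSymm)
    (hA₁pos : (A₁.map ((↑) : ℤ → ℝ)).PosDef)
    (hA₂pos : (A₂.map ((↑) : ℤ → ℝ)).PosDef)
    (hA₁even : ∀ i, 2 ∣ A₁ i i) (hA₂even : ∀ i, 2 ∣ A₂ i i)
    (Q₁ Q₂ : (Fin k → ℤ) → ℤ)
    (hQ₁ : ∀ x, 2 * Q₁ x = x ⬝ᵥ A₁.mulVec x)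
    (hQ₂ : ∀ x, 2 * Q₂ x = x ⬝ᵥ A₂.mulVec x)
    (lam : ℝ) (hlam₀ : 0 < lam) (hlam₁ : lam < 1)
    (p q : ℝ) (hp₁ : 1 ≤ p) (hq₁ : 1 ≤ q)
    (hbound : ∃ A : ℝ≥0, ∀ f : ((Fin k → ℤ) × ℤ) → ℂ, (Function.support f).Finite →
      eLpNorm
        (fun nt : (Fin k → ℤ) × ℤ =>
          ∑' m : Fin k → ℤ,
            if m = 0 then 0
            else f (nt.1 - m, nt.2 - Q₁ m) /
              Complex.ofReal ((Q₂ m : ℝ) ^ ((k : ℝ) * lam / 2)))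
        (ENNReal.ofReal q) Measure.count
      ≤ (A : ℝ≥0∞) * eLpNorm f (ENNReal.ofReal p) Measure.count) :
    1 / q ≤ 1 / p - (k : ℝ) / (k + 2) * (1 - lam) := by
  classical
  obtain ⟨A, hA⟩ := hbound
  have hp0 : (0:ℝ) < p := by linarith
  have hq0 : (0:ℝ) < q := by linarith
  have hkr : (1:ℝ) ≤ (k:ℝ) := by exact_mod_cast hk
  -- constants
  set c₁ : ℤ := ∑ i, ∑ j, |A₁ i j| with hc₁def
  set c₂ : ℤ := ∑ i, ∑ j, |A₂ i j| with hc₂def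
  have hc₁0 : 0 ≤ c₁ :=
    Finset.sum_nonneg fun i _ => Finset.sum_nonneg fun j _ => abs_nonneg _
  have hc₂2 : 2 ≤ c₂ := by
    set m : Fin k → ℤ := fun j => if j = ⟨0, hk⟩ then 1 else 0 with hmdef
    have hm0 : m ≠ 0 := by
      intro h
      have := congrFun h ⟨0, hk⟩
      simp [hmdef] at this
    have h1 : 1 ≤ Q₂ m := quad_pos A₂ hA₂pos Q₂ hQ₂ m hm0
    have h2 : |m ⬝ᵥ A₂.mulVec m| ≤ c₂ * 1 ^ 2 :=
      quad_bound A₂ m 1 one_pos.le (fun i => by by_cases h : i = ⟨0, hk⟩ <;> simp [hmdef, h])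
    have h3 : 2 * Q₂ m ≤ |m ⬝ᵥ A₂.mulVec m| := (hQ₂ m) ▸ le_abs_self _
    omega
  have hc₂r : (0:ℝ) < (c₂:ℝ) := by exact_mod_cast (by omega : (0:ℤ) < c₂)
  set s : ℝ := (k:ℝ) * lam / 2 with hsdef
  have hs0 : 0 ≤ s := by positivity
  set C' : ℝ := 5 ^ k * (3 * (1 + (c₁:ℝ))) with hC'def
  have hC'0 : (0:ℝ) < C' := by positivity
  set K : ℝ := (A:ℝ) * (C' ^ (1/p) * (c₂:ℝ) ^ s) with hKdef
  set e : ℝ := ((k:ℝ)+2)/q + (k:ℝ) - (k:ℝ)*lam - ((k:ℝ)+2)/p with hedef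
  -- main estimate for each N
  have key : ∀ N : ℕ, 1 ≤ N → (N:ℝ) ^ e ≤ K := by
    intro N hN1
    have hNr : (0:ℝ) < (N:ℝ) := by exact_mod_cast Nat.pos_of_ne_zero (by omega)
    have hNr1 : (1:ℝ) ≤ (N:ℝ) := by exact_mod_cast hN1
    set Nz : ℤ := (N:ℤ) with hNzdef
    have hNz1 : 1 ≤ Nz := by rw [hNzdef]; exact_mod_cast hN1
    set T : ℤ := (1 + c₁) * Nz ^ 2 with hTdef
    have hT1 : 1 ≤ T := by nlinarith
    set F₁ : Finset (Fin k → ℤ) := Finset.Icc (fun _ => -(2*Nz)) (fun _ => 2*Nz) with hF₁def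
    set F : Finset ((Fin k → ℤ) × ℤ) := F₁ ×ˢ Finset.Icc (-T) T with hFdef
    set f : ((Fin k → ℤ) × ℤ) → ℂ := fun x => if x ∈ F then (1:ℂ) else 0 with hfdef
    have hfsupp : (Function.support f).Finite := by
      apply Set.Finite.subset F.finite_toSet
      intro x hx
      rw [Finset.mem_coe]
      by_contra h
      exact hx (by simp [hfdef, h])
    have hmain := hA f hfsupp
    -- cardinalities
    have hcardF₁ : F₁.card = (4*N+1)^k := by
      rw [hF₁def, Pi.card_Icc]
      simp only [Int.card_Icc]
      rw [Finset.prod_const, Finset.card_univ, Fintype.card_fin]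
      congr 1
      omega
    have hTr : (T:ℝ) = (1 + (c₁:ℝ)) * (N:ℝ)^2 := by
      rw [hTdef, hNzdef]; push_cast; ring
    have hcardIccT : (((Finset.Icc (-T) T).card : ℕ) : ℝ) = 2*(T:ℝ)+1 := by
      have hz : (((Finset.Icc (-T) T).card : ℕ) : ℤ) = 2*T+1 := by
        rw [Int.card_Icc, Int.toNat_of_nonneg (by omega)]
        ring
      exact_mod_cast hz
    -- the good set G
    set G₁ : Finset (Fin k → ℤ) := Finset.Icc (fun _ => -Nz) (fun _ => Nz) with hG₁def
    set G : Finset ((Fin k → ℤ) × ℤ) := G₁ ×ˢ Finset.Icc (-(Nz^2)) (Nz^2) with hGdef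
    have hcardG₁ : G₁.card = (2*N+1)^k := by
      rw [hG₁def, Pi.card_Icc]
      simp only [Int.card_Icc]
      rw [Finset.prod_const, Finset.card_univ, Fintype.card_fin]
      congr 1
      omega
    have hcardG : G.card = (2*N+1)^k * (2*N^2+1) := by
      rw [hGdef, Finset.card_product, hcardG₁, Int.card_Icc]
      congr 1
      have hsq : Nz^2 = ((N^2 : ℕ) : ℤ) := by rw [hNzdef]; push_cast; ring
      rw [hsq]
      omega
    have hcardGlb : N^(k+2) ≤ G.card := by
      rw [hcardG, pow_add]
      refine Nat.mul_le_mul (Nat.pow_le_pow_left (by omega) k) ?_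
      nlinarith [sq_nonneg N]
    -- pointwise lower bound on the transform over G
    set δ : ℝ := (N:ℝ)^(k:ℕ) / ((c₂:ℝ) * (N:ℝ)^2) ^ s with hδdef
    have hδ0 : 0 < δ := by
      rw [hδdef]
      positivity
    have hlb : ∀ x ∈ G, δ ≤
        ‖∑' m : Fin k → ℤ, (if m = 0 then 0
            else f (x.1 - m, x.2 - Q₁ m) /
              Complex.ofReal ((Q₂ m : ℝ) ^ ((k : ℝ) * lam / 2)))‖ := by
      rintro ⟨n, t⟩ hx
      rw [hGdef, Finset.mem_product] at hx
      obtain ⟨hn, ht⟩ := hx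
      rw [hG₁def, Finset.mem_Icc] at hn
      rw [Finset.mem_Icc] at ht
      have hn' : ∀ i, |n i| ≤ Nz := fun i => abs_le.mpr ⟨hn.1 i, hn.2 i⟩
      have ht' : |t| ≤ Nz^2 := abs_le.mpr ht
      set r : (Fin k → ℤ) → ℝ := fun m => if m = 0 then 0
        else (if (n - m, t - Q₁ m) ∈ F then (1:ℝ) else 0) / (Q₂ m : ℝ) ^ ((k:ℝ)*lam/2)
        with hrdef
      have heq : (∑' m : Fin k → ℤ, (if m = 0 then 0
            else f (n - m, t - Q₁ m) /
              Complex.ofReal ((Q₂ m : ℝ) ^ ((k : ℝ) * lam / 2))))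
          = Complex.ofReal (∑' m, r m) := by
        rw [Complex.ofReal_tsum]
        apply tsum_congr
        intro m
        simp only [hrdef, hfdef]
        rcases eq_or_ne m 0 with hm | hm
        · rw [if_pos hm, if_pos hm, Complex.ofReal_zero]
        · rw [if_neg hm, if_neg hm, Complex.ofReal_div]
          by_cases hmem : (n - m, t - Q₁ m) ∈ F
          · rw [if_pos hmem, if_pos hmem, Complex.ofReal_one]
          · rw [if_neg hmem, if_neg hmem, Complex.ofReal_zero]
      have hr0 : ∀ m, 0 ≤ r m := by
        intro m
        simp only [hrdef]
        by_cases hm : m = 0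
        · simp [hm]
        · simp only [hm, if_false]
          have h1 : (1:ℤ) ≤ Q₂ m := quad_pos A₂ hA₂pos Q₂ hQ₂ m hm
          have h2 : (0:ℝ) ≤ (Q₂ m : ℝ) := by exact_mod_cast (by omega : (0:ℤ) ≤ Q₂ m)
          exact div_nonneg (by split <;> norm_num) (Real.rpow_nonneg h2 _)
      have hrsum : Summable r := by
        apply summable_of_finite_support
        apply Set.Finite.subset (F₁.image (fun a => n - a)).finite_toSet
        intro m hm
        simp only [Function.mem_support, hrdef] at hm
        by_cases h0 : m = 0
        · simp [h0] at hm
        · simp only [h0, if_false] at hm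
          have hmem : (n - m, t - Q₁ m) ∈ F := by
            by_contra h
            simp [h] at hm
          rw [hFdef, Finset.mem_product] at hmem
          simp only [Finset.coe_image, Set.mem_image, Finset.mem_coe]
          exact ⟨n - m, hmem.1, by ring⟩
      set S : Finset (Fin k → ℤ) := G₁.erase 0 with hSdef
      have hcardS : N^k ≤ S.card := by
        rw [hSdef, Finset.card_erase_of_mem, hcardG₁]
        · have h1 : 1 ≤ N^k := Nat.one_le_pow _ _ (by omega)
          have h2 : N^k + 1 ≤ (2*N+1)^k := by
            calc N^k + 1 ≤ N^k + N^k := by omega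
              _ = 2 * N^k := by ring
              _ ≤ 2^k * N^k := Nat.mul_le_mul_right _ (by
                    calc 2 = 2^1 := (pow_one 2).symm
                      _ ≤ 2^k := Nat.pow_le_pow_right (by norm_num) hk)
              _ = (2*N)^k := (mul_pow 2 N k).symm
              _ ≤ (2*N+1)^k := Nat.pow_le_pow_left (by omega) k
          omega
        · rw [hG₁def, Finset.mem_Icc]
          constructor <;> intro i <;> simp <;> omega
      have hterm : ∀ m ∈ S, 1 / ((c₂:ℝ) * (N:ℝ)^2) ^ s ≤ r m := by
        intro m hm
        have hm0 : m ≠ 0 := Finset.ne_of_mem_erase hm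
        have hmIcc : m ∈ G₁ := Finset.mem_of_mem_erase hm
        rw [hG₁def, Finset.mem_Icc] at hmIcc
        have hm' : ∀ i, |m i| ≤ Nz := fun i => abs_le.mpr ⟨hmIcc.1 i, hmIcc.2 i⟩
        have hQ₂1 : (1:ℤ) ≤ Q₂ m := quad_pos A₂ hA₂pos Q₂ hQ₂ m hm0
        have hQ₂ub : Q₂ m ≤ c₂ * Nz^2 := by
          have h2 := quad_bound A₂ m Nz (by linarith [hNz1]) hm'
          have h3 : 2 * Q₂ m ≤ |m ⬝ᵥ A₂.mulVec m| := (hQ₂ m) ▸ le_abs_self _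
          linarith
        have hQ₁ub : |Q₁ m| ≤ c₁ * Nz^2 := by
          have h2 := quad_bound A₁ m Nz (by linarith [hNz1]) hm'
          have h3 : |2 * Q₁ m| = 2 * |Q₁ m| := by rw [abs_mul]; simp
          rw [hQ₁ m] at h3
          linarith [abs_nonneg (Q₁ m)]
        have hmem : (n - m, t - Q₁ m) ∈ F := by
          rw [hFdef, Finset.mem_product]
          constructor
          · rw [hF₁def, Finset.mem_Icc]
            constructor <;> intro i <;>
              [skip; skip] <;>
              · have h1 := abs_le.mp (hn' i)
                have h2 := abs_le.mp (hm' i)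
                simp only [Pi.sub_apply]
                omega
          · rw [Finset.mem_Icc]
            dsimp only
            have h1 := abs_le.mp ht'
            have h2 := abs_le.mp hQ₁ub
            rw [hTdef]
            constructor <;> linarith
        simp only [hrdef, hm0, if_false, hmem, if_true]
        have hbase : (0:ℝ) < (Q₂ m : ℝ) := by exact_mod_cast (by linarith : (0:ℤ) < Q₂ m)
        have hub : (Q₂ m : ℝ) ≤ (c₂:ℝ) * (N:ℝ)^2 := by
          have h5 : ((Q₂ m : ℤ) : ℝ) ≤ ((c₂ * Nz^2 : ℤ) : ℝ) := by exact_mod_cast hQ₂ub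
          rw [hNzdef] at h5
          push_cast at h5
          exact h5
        apply one_div_le_one_div_of_le
        · exact Real.rpow_pos_of_pos hbase _
        · exact Real.rpow_le_rpow hbase.le hub (by positivity)
      have hsum_lb : δ ≤ ∑' m, r m := by
        calc δ = (N:ℝ)^(k:ℕ) * (1 / ((c₂:ℝ) * (N:ℝ)^2) ^ s) := by
              rw [hδdef]; ring
          _ ≤ (S.card : ℝ) * (1 / ((c₂:ℝ) * (N:ℝ)^2) ^ s) := by
              apply mul_le_mul_of_nonneg_right
              · exact_mod_cast Nat.cast_le.mpr hcardS
              · positivity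
          _ = ∑ m ∈ S, 1 / ((c₂:ℝ) * (N:ℝ)^2) ^ s := by
              rw [Finset.sum_const, nsmul_eq_mul]
          _ ≤ ∑ m ∈ S, r m := Finset.sum_le_sum hterm
          _ ≤ ∑' m, r m := Summable.sum_le_tsum S (fun m _ => hr0 m) hrsum
      rw [heq, Complex.norm_real, Real.norm_eq_abs]
      rw [abs_of_nonneg (tsum_nonneg hr0)]
      exact hsum_lb
    -- eLpNorm lower bound
    have hq'0 : ENNReal.ofReal q ≠ 0 := by simp [ENNReal.ofReal_eq_zero]; linarith
    have hq'top : ENNReal.ofReal q ≠ ⊤ := by simp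
    have hJlb : (G.card : ℝ≥0∞) ^ (1/q) * ENNReal.ofReal δ ≤
        eLpNorm (fun nt : (Fin k → ℤ) × ℤ =>
          ∑' m : Fin k → ℤ,
            if m = 0 then 0
            else f (nt.1 - m, nt.2 - Q₁ m) /
              Complex.ofReal ((Q₂ m : ℝ) ^ ((k : ℝ) * lam / 2)))
          (ENNReal.ofReal q) Measure.count := by
      rw [eLpNorm_eq_lintegral_rpow_enorm_toReal hq'0 hq'top, lintegral_count,
        ENNReal.toReal_ofReal hq0.le]
      have step1 : (G.card : ℝ≥0∞) * (ENNReal.ofReal δ) ^ q ≤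
          ∑' x : (Fin k → ℤ) × ℤ, (‖∑' m : Fin k → ℤ,
            (if m = 0 then 0
            else f (x.1 - m, x.2 - Q₁ m) /
              Complex.ofReal ((Q₂ m : ℝ) ^ ((k : ℝ) * lam / 2)))‖ₑ) ^ q := by
        calc (G.card : ℝ≥0∞) * (ENNReal.ofReal δ) ^ q
            = ∑ x ∈ G, (ENNReal.ofReal δ) ^ q := by
              rw [Finset.sum_const, nsmul_eq_mul]
          _ ≤ ∑ x ∈ G, (‖∑' m : Fin k → ℤ,
              (if m = 0 then 0
              else f (x.1 - m, x.2 - Q₁ m) /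
                Complex.ofReal ((Q₂ m : ℝ) ^ ((k : ℝ) * lam / 2)))‖ₑ) ^ q := by
              apply Finset.sum_le_sum
              intro x hx
              apply ENNReal.rpow_le_rpow _ hq0.le
              rw [← ofReal_norm]
              exact ENNReal.ofReal_le_ofReal (hlb x hx)
          _ ≤ _ := ENNReal.sum_le_tsum G
      calc (G.card : ℝ≥0∞) ^ (1/q) * ENNReal.ofReal δ
          = ((G.card : ℝ≥0∞) * (ENNReal.ofReal δ) ^ q) ^ (1/q) := by
            rw [ENNReal.mul_rpow_of_nonneg _ _ (by positivity), ← ENNReal.rpow_mul,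
              mul_one_div, div_self hq0.ne', ENNReal.rpow_one]
        _ ≤ _ := ENNReal.rpow_le_rpow step1 (by positivity)
    -- eLpNorm of f
    have hfnorm : eLpNorm f (ENNReal.ofReal p) Measure.count = (F.card : ℝ≥0∞) ^ (1/p) := by
      rw [hfdef]
      exact eLpNorm_finset_indicator F p hp₁
    -- combine
    have hchain : (G.card : ℝ≥0∞) ^ (1/q) * ENNReal.ofReal δ ≤
        (A : ℝ≥0∞) * (F.card : ℝ≥0∞) ^ (1/p) := by
      calc (G.card : ℝ≥0∞) ^ (1/q) * ENNReal.ofReal δ ≤ _ := hJlb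
        _ ≤ (A : ℝ≥0∞) * eLpNorm f (ENNReal.ofReal p) Measure.count := hmain
        _ = (A : ℝ≥0∞) * (F.card : ℝ≥0∞) ^ (1/p) := by rw [hfnorm]
    -- translate to reals
    have hcardFub : (F.card : ℝ) ≤ C' * (N:ℝ)^(k+2) := by
      have hcF : (F.card : ℝ) = ((F₁.card : ℕ) : ℝ) * (((Finset.Icc (-T) T).card : ℕ) : ℝ) := by
        rw [hFdef, Finset.card_product]; push_cast; ring
      rw [hcF, hcardIccT, hcardF₁]
      have hc : (1:ℝ) ≤ 1 + (c₁:ℝ) := by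
        have : (0:ℝ) ≤ (c₁:ℝ) := by exact_mod_cast hc₁0
        linarith
      have h2 : (((4*N+1)^k : ℕ):ℝ) ≤ (5*(N:ℝ))^k := by
        push_cast
        apply pow_le_pow_left₀ (by positivity)
        linarith [hNr1]
      have h3 : 2*(T:ℝ) + 1 ≤ 3*(1+(c₁:ℝ))*(N:ℝ)^2 := by
        rw [hTr]
        have hN2 : (1:ℝ) ≤ (N:ℝ)^2 := by nlinarith [hNr1]
        have h4 : (1:ℝ) ≤ (1+(c₁:ℝ))*(N:ℝ)^2 := by nlinarith
        linarith
      calc (((4*N+1)^k : ℕ):ℝ) * (2*(T:ℝ) + 1)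
          ≤ (5*(N:ℝ))^k * (3*(1+(c₁:ℝ))*(N:ℝ)^2) := by
            apply mul_le_mul h2 h3 ?_ (by positivity)
            · rw [hTr]; positivity
        _ = C' * (N:ℝ)^(k+2) := by
            rw [hC'def, mul_pow, pow_add]
            ring
    have hGlbEnn : ENNReal.ofReal ((N:ℝ)^((k:ℝ)+2)) ≤ (G.card : ℝ≥0∞) := by
      have h1 : ((N^(k+2) : ℕ) : ℝ≥0∞) ≤ (G.card : ℝ≥0∞) := by exact_mod_cast hcardGlb
      refine le_trans (le_of_eq ?_) h1
      rw [← ENNReal.ofReal_natCast]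
      congr 1
      push_cast
      rw [← Real.rpow_natCast (N:ℝ) (k+2)]
      congr 1
      push_cast
      ring
    have hFubEnn : (F.card : ℝ≥0∞) ≤ ENNReal.ofReal (C' * (N:ℝ)^(k+2)) := by
      rw [← ENNReal.ofReal_natCast]
      exact ENNReal.ofReal_le_ofReal hcardFub
    have hreal : (N:ℝ)^(((k:ℝ)+2)/q) * δ ≤ (A:ℝ) * (C'^(1/p) * (N:ℝ)^(((k:ℝ)+2)/p)) := by
      rw [← ENNReal.ofReal_le_ofReal_iff (by positivity)]
      calc ENNReal.ofReal ((N:ℝ)^(((k:ℝ)+2)/q) * δ)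
          = ENNReal.ofReal ((N:ℝ)^(((k:ℝ)+2)/q)) * ENNReal.ofReal δ := by
            rw [ENNReal.ofReal_mul (by positivity)]
        _ ≤ (G.card : ℝ≥0∞) ^ (1/q) * ENNReal.ofReal δ := by
            apply mul_le_mul_left
            have : (N:ℝ)^(((k:ℝ)+2)/q) = ((N:ℝ)^((k:ℝ)+2))^(1/q) := by
              rw [← Real.rpow_mul (by positivity)]
              congr 1
              field_simp
            rw [this, ← ENNReal.ofReal_rpow_of_pos (by positivity)]
            exact ENNReal.rpow_le_rpow hGlbEnn (by positivity)
        _ ≤ (A : ℝ≥0∞) * (F.card : ℝ≥0∞) ^ (1/p) := hchain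
        _ ≤ ENNReal.ofReal ((A:ℝ) * (C'^(1/p) * (N:ℝ)^(((k:ℝ)+2)/p))) := by
            rw [ENNReal.ofReal_mul (by positivity), ← ENNReal.ofReal_coe_nnreal]
            apply mul_le_mul_right
            calc (F.card : ℝ≥0∞) ^ (1/p) ≤ (ENNReal.ofReal (C' * (N:ℝ)^(k+2))) ^ (1/p) :=
                  ENNReal.rpow_le_rpow hFubEnn (by positivity)
              _ = ENNReal.ofReal (C'^(1/p) * (N:ℝ)^(((k:ℝ)+2)/p)) := by
                  rw [ENNReal.ofReal_rpow_of_pos (by positivity)]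
                  congr 1
                  rw [Real.mul_rpow (by positivity) (by positivity)]
                  congr 1
                  rw [← Real.rpow_natCast (N:ℝ) (k+2), ← Real.rpow_mul (by positivity)]
                  congr 1
                  push_cast
                  ring
    -- final algebra
    have hden : ((c₂:ℝ) * (N:ℝ)^2) ^ s = (c₂:ℝ)^s * (N:ℝ)^((k:ℝ)*lam) := by
      rw [Real.mul_rpow hc₂r.le (by positivity), ← Real.rpow_natCast (N:ℝ) 2,
        ← Real.rpow_mul hNr.le]
      congr 2
      rw [hsdef]
      push_cast
      ring
    have hδeq : δ = (N:ℝ)^((k:ℝ)) / ((c₂:ℝ)^s * (N:ℝ)^((k:ℝ)*lam)) := by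
      rw [hδdef, hden, Real.rpow_natCast]
    have hX : (0:ℝ) < (N:ℝ)^((k:ℝ)*lam) := Real.rpow_pos_of_pos hNr _
    have hY : (0:ℝ) < (N:ℝ)^(((k:ℝ)+2)/p) := Real.rpow_pos_of_pos hNr _
    have hZ : (0:ℝ) < (c₂:ℝ)^s := Real.rpow_pos_of_pos hc₂r _
    have hNe : (N:ℝ)^e = ((N:ℝ)^(((k:ℝ)+2)/q) * (N:ℝ)^((k:ℝ))) /
        ((N:ℝ)^((k:ℝ)*lam) * (N:ℝ)^(((k:ℝ)+2)/p)) := by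
      rw [eq_div_iff (by positivity)]
      rw [← Real.rpow_add hNr, ← Real.rpow_add hNr, ← Real.rpow_add hNr]
      congr 1
      rw [hedef]
      ring
    calc (N:ℝ)^e = ((N:ℝ)^(((k:ℝ)+2)/q) * (N:ℝ)^((k:ℝ))) /
          ((N:ℝ)^((k:ℝ)*lam) * (N:ℝ)^(((k:ℝ)+2)/p)) := hNe
      _ = ((N:ℝ)^(((k:ℝ)+2)/q) * δ) * ((c₂:ℝ)^s / (N:ℝ)^(((k:ℝ)+2)/p)) := by
          rw [hδeq]
          field_simp
      _ ≤ ((A:ℝ) * (C'^(1/p) * (N:ℝ)^(((k:ℝ)+2)/p))) * ((c₂:ℝ)^s / (N:ℝ)^(((k:ℝ)+2)/p)) := by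
          apply mul_le_mul_of_nonneg_right hreal (by positivity)
      _ = K := by
          rw [hKdef]
          field_simp
  -- conclude
  have he0 : e ≤ 0 := exp_le_zero key
  have hk2 : (0:ℝ) < (k:ℝ) + 2 := by linarith
  have hfin : 1/q + (k:ℝ)/(k+2)*(1-lam) - 1/p = e / ((k:ℝ)+2) := by
    rw [hedef]
    field_simp
    ring
  have : e / ((k:ℝ)+2) ≤ 0 := div_nonpos_iff.mpr (Or.inr ⟨he0, hk2.le⟩)
  linarith [hfin ▸ this]
end
end

section
/- Let k ≥ 1, let Q1 and Q2 be positive definite integral quadratic forms in k variables, let 0 < λ < 1, and let 1 ≤ p, q ≤ ∞. If there exists a constant A such that ‖J_{Q1,Q2,λ} f‖_{ℓ^q} ≤ A ‖f‖_{ℓ^p} for every finitely supported f : ℤ^k × ℤ → ℂ, then 1/q < λ and 1/p > 1 − λ. -/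
open Matrix MeasureTheory
open scoped NNReal ENNReal

noncomputable section

section Generic
variable {α : Type*} [MeasurableSpace α] [MeasurableSingletonClass α]

lemma eLpNorm_count_eq (g : α → ℂ) {p : ℝ≥0∞} (hp0 : p ≠ 0) (hpt : p ≠ ∞) :
    eLpNorm g p Measure.count
      = (∑' x, (‖g x‖₊ : ℝ≥0∞) ^ p.toReal) ^ (1 / p.toReal) := by
  rw [eLpNorm_eq_lintegral_rpow_enorm_toReal hp0 hpt, lintegral_count]
  simp only [enorm_eq_nnnorm]

lemma point_le_eLpNorm (g : α → ℂ) {p : ℝ≥0∞} (hp : p ≠ 0) (x₀ : α) :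
    (‖g x₀‖₊ : ℝ≥0∞) ≤ eLpNorm g p Measure.count := by
  rcases eq_or_ne p ∞ with rfl | hpt
  · rw [eLpNorm_exponent_top, eLpNormEssSup]
    have h := ae_le_essSup (μ := Measure.count) (f := fun x => (‖g x‖₊ : ℝ≥0∞))
    rw [Filter.eventually_iff, mem_ae_iff] at h
    have h2 : ({y | (fun y => (‖g y‖₊ : ℝ≥0∞) ≤
        essSup (fun x => (‖g x‖₊ : ℝ≥0∞)) Measure.count) y}ᶜ : Set α) = ∅ :=
      Measure.count_eq_zero_iff.mp h
    by_contra hc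
    have : x₀ ∈ ({y | (fun y => (‖g y‖₊ : ℝ≥0∞) ≤
        essSup (fun x => (‖g x‖₊ : ℝ≥0∞)) Measure.count) y}ᶜ : Set α) := hc
    rw [h2] at this
    exact this
  · have hr : 0 < p.toReal := ENNReal.toReal_pos hp hpt
    rw [eLpNorm_count_eq g hp hpt]
    have h1 : (‖g x₀‖₊ : ℝ≥0∞) ^ p.toReal ≤ ∑' x, (‖g x‖₊ : ℝ≥0∞) ^ p.toReal :=
      ENNReal.le_tsum x₀
    calc (‖g x₀‖₊ : ℝ≥0∞) = ((‖g x₀‖₊ : ℝ≥0∞) ^ p.toReal) ^ (1 / p.toReal) := by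
          rw [← ENNReal.rpow_mul, mul_one_div, div_self hr.ne', ENNReal.rpow_one]
      _ ≤ _ := ENNReal.rpow_le_rpow h1 (by positivity)

omit [MeasurableSingletonClass α] in
lemma eLpNorm_top_le (g : α → ℂ) (c : ℝ≥0∞) (h : ∀ x, (‖g x‖₊ : ℝ≥0∞) ≤ c) :
    eLpNorm g ∞ Measure.count ≤ c := by
  rw [eLpNorm_exponent_top, eLpNormEssSup]
  exact essSup_le_of_ae_le c (Filter.Eventually.of_forall h)

end Generic

lemma dyadic_le {x : ℤ} {j j' : ℕ} (h2 : x ≤ 2^(j+1)) (h3 : 2^j' < x) : j' ≤ j := by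
  by_contra h
  push_neg at h
  have : (2:ℤ)^(j+1) ≤ 2^j' := pow_le_pow_right₀ (by norm_num) h
  omega

lemma dyadic_eq {x : ℤ} {j j' : ℕ} (h1 : 2^j < x) (h2 : x ≤ 2^(j+1)) (h3 : 2^j' < x)
    (h4 : x ≤ 2^(j'+1)) : j = j' :=
  le_antisymm (dyadic_le h4 h1) (dyadic_le h2 h3)

def shell (k j : ℕ) : Finset (Fin k → ℤ) :=
  Fintype.piFinset fun _ => Finset.Icc (2^j + 1 : ℤ) (2^(j+1))

lemma mem_shell {k j : ℕ} {m : Fin k → ℤ} :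
    m ∈ shell k j ↔ ∀ i, 2^j < m i ∧ m i ≤ 2^(j+1) := by
  simp only [shell, Fintype.mem_piFinset, Finset.mem_Icc, Int.lt_iff_add_one_le]

lemma shell_card (k j : ℕ) : (shell k j).card = 2^(j*k) := by
  have h : ((2:ℤ)^(j+1) + 1 - (2^j + 1)).toNat = 2^j := by
    have h1 : (2:ℤ)^(j+1) = 2^j * 2 := pow_succ 2 j
    have h2 : ((2:ℤ)^j).toNat = 2^j := by
      rw [show ((2:ℤ)^j) = ((2^j : ℕ) : ℤ) by push_cast; ring, Int.toNat_natCast]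
    omega
  simp only [shell, Fintype.card_piFinset, Int.card_Icc, h, Finset.prod_const,
    Finset.card_univ, Fintype.card_fin]
  rw [← pow_mul, mul_comm]

lemma shell_disjoint {k j j' : ℕ} (hk : 1 ≤ k) (hne : j ≠ j') :
    Disjoint (shell k j) (shell k j') := by
  rw [Finset.disjoint_left]
  intro m hm hm'
  rw [mem_shell] at hm hm'
  exact hne (dyadic_eq (hm ⟨0, hk⟩).1 (hm ⟨0, hk⟩).2 (hm' ⟨0, hk⟩).1 (hm' ⟨0, hk⟩).2)

lemma shell_pos {k j : ℕ} {m : Fin k → ℤ} (hm : m ∈ shell k j) (i : Fin k) : 0 < m i :=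
  lt_trans (pow_pos (by norm_num) j) (mem_shell.mp hm i).1

lemma shell_ne_zero {k j : ℕ} (hk : 1 ≤ k) {m : Fin k → ℤ} (hm : m ∈ shell k j) : m ≠ 0 := by
  intro h
  have := shell_pos hm ⟨0, hk⟩
  rw [h] at this
  exact lt_irrefl 0 this

lemma shell_abs_le {k j : ℕ} {m : Fin k → ℤ} (hm : m ∈ shell k j) (i : Fin k) :
    |m i| ≤ 2^(j+1) := by
  rw [abs_le]
  constructor
  · linarith [shell_pos hm i, (mem_shell.mp hm i).2,
      pow_pos (show (0:ℤ) < 2 by norm_num) (j+1)]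
  · exact (mem_shell.mp hm i).2

lemma rpow_shell_lower {C t s₁ s₂ e₁ e₂ : ℝ} (hC : 1 ≤ C) (ht1 : 1 ≤ t)
    (ht : t ≤ C * 2 ^ e₁) (hs : 0 ≤ s₁) (hs' : s₁ ≤ s₂) (he : e₁ * s₁ ≤ e₂) :
    C ^ (-s₂) * 2 ^ (-e₂) ≤ t ^ (-s₁) := by
  have h0 : (0:ℝ) < t := lt_of_lt_of_le one_pos ht1
  have hC0 : (0:ℝ) < C := lt_of_lt_of_le one_pos hC
  have h2 : (0:ℝ) < 2 ^ e₁ := Real.rpow_pos_of_pos two_pos e₁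
  have hT : t ^ (-s₁) ≥ (C * 2 ^ e₁) ^ (-s₁) :=
    Real.rpow_le_rpow_of_nonpos h0 ht (neg_nonpos.mpr hs)
  refine le_trans ?_ hT
  rw [Real.mul_rpow hC0.le h2.le, ← Real.rpow_mul (by norm_num : (0:ℝ) ≤ 2)]
  have h1 : C ^ (-s₂) ≤ C ^ (-s₁) :=
    Real.rpow_le_rpow_of_exponent_le hC (by linarith)
  have h2' : (2:ℝ) ^ (-e₂) ≤ 2 ^ (e₁ * -s₁) :=
    Real.rpow_le_rpow_of_exponent_le one_le_two (by nlinarith)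
  exact mul_le_mul h1 h2' (Real.rpow_pos_of_pos two_pos _).le
    (Real.rpow_pos_of_pos hC0 _).le

lemma two_pow_mul (j k : ℕ) :
    ((2^(j*k) : ℕ) : ℝ) * (2:ℝ) ^ (-(((j:ℝ)+1)*(k:ℝ))) = (2:ℝ) ^ (-(k:ℝ)) := by
  rw [show ((2^(j*k) : ℕ) : ℝ) = (2:ℝ) ^ ((j*k : ℕ):ℝ) by
    rw [Real.rpow_natCast]; push_cast; ring]
  rw [← Real.rpow_add two_pos]
  congr 1
  push_cast
  ring

lemma two_pow_mul' (j k : ℕ) :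
    ((2^(j*k) : ℕ) : ℝ) * (2:ℝ) ^ (-((j:ℝ)*(k:ℝ))) = 1 := by
  rw [show ((2^(j*k) : ℕ) : ℝ) = (2:ℝ) ^ ((j*k : ℕ):ℝ) by
    rw [Real.rpow_natCast]; push_cast; ring]
  rw [← Real.rpow_add two_pos]
  rw [show ((j*k : ℕ):ℝ) + (-((j:ℝ)*(k:ℝ))) = 0 by push_cast; ring, Real.rpow_zero]

section QF
variable {k : ℕ} (hk : 1 ≤ k) (A₂ : Matrix (Fin k) (Fin k) ℤ)
  (hA₂pos : (A₂.map ((↑) : ℤ → ℝ)).PosDef)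
  (Q₂ : (Fin k → ℤ) → ℤ) (hQ₂ : ∀ x, 2 * Q₂ x = x ⬝ᵥ A₂.mulVec x)

lemma qf_cast (m : Fin k → ℤ) : ((m ⬝ᵥ A₂.mulVec m : ℤ) : ℝ)
    = (fun i => (m i : ℝ)) ⬝ᵥ (A₂.map ((↑) : ℤ → ℝ)).mulVec (fun i => (m i : ℝ)) := by
  simp only [dotProduct, Matrix.mulVec, Matrix.map_apply, Finset.mul_sum]
  push_cast
  ring

include hA₂pos hQ₂ in
lemma qf_pos (m : Fin k → ℤ) (hm : m ≠ 0) : 1 ≤ Q₂ m := by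
  have hmr : (fun i => (m i : ℝ)) ≠ 0 := by
    intro h
    apply hm
    funext i
    have := congrFun h i
    simpa using this
  have h := hA₂pos.dotProduct_mulVec_pos hmr
  rw [star_trivial] at h
  have h2 : (0:ℝ) < ((2 * Q₂ m : ℤ) : ℝ) := by
    rw [hQ₂ m, qf_cast]; exact h
  have : (0:ℤ) < 2 * Q₂ m := by exact_mod_cast h2
  omega

include hk hA₂pos hQ₂ in
lemma qf_ub (m : Fin k → ℤ) (hm : m ≠ 0) (B : ℤ) (hB : ∀ i, |m i| ≤ B) :
    Q₂ m ≤ (∑ i, ∑ j, |A₂ i j|) * B ^ 2 := by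
  have hB0 : 0 ≤ B := le_trans (abs_nonneg _) (hB ⟨0, by omega⟩)
  have h1 : 2 * Q₂ m ≤ (∑ i, ∑ j, |A₂ i j|) * B ^ 2 := by
    rw [hQ₂ m]
    have expand : m ⬝ᵥ A₂.mulVec m = ∑ i, ∑ j, m i * (A₂ i j * m j) := by
      simp only [dotProduct, Matrix.mulVec, Finset.mul_sum]
    rw [expand]
    calc ∑ i, ∑ j, m i * (A₂ i j * m j) ≤ ∑ i, ∑ j, B * (|A₂ i j| * B) := by
          apply Finset.sum_le_sum; intro i _
          apply Finset.sum_le_sum; intro j _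
          calc m i * (A₂ i j * m j) ≤ |m i * (A₂ i j * m j)| := le_abs_self _
            _ = |m i| * (|A₂ i j| * |m j|) := by rw [abs_mul, abs_mul]
            _ ≤ B * (|A₂ i j| * B) :=
                mul_le_mul (hB i) (mul_le_mul_of_nonneg_left (hB j) (abs_nonneg _))
                  (by positivity) hB0
      _ = (∑ i, ∑ j, |A₂ i j|) * B ^ 2 := by
          rw [Finset.sum_mul]
          apply Finset.sum_congr rfl; intro i _
          rw [Finset.sum_mul]
          apply Finset.sum_congr rfl; intro j _
          ring
  have h2 : 1 ≤ Q₂ m := qf_pos A₂ hA₂pos Q₂ hQ₂ m hm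
  omega

include hk hA₂pos hQ₂ in
lemma qf_C_pos : 1 ≤ ∑ i, ∑ j, |A₂ i j| := by
  by_contra h
  push_neg at h
  have hnn : (0:ℤ) ≤ ∑ i, ∑ j, |A₂ i j| :=
    Finset.sum_nonneg fun i _ => Finset.sum_nonneg fun j _ => abs_nonneg _
  have hz : ∑ i, ∑ j, |A₂ i j| = 0 := by omega
  have h0 : A₂ = 0 := by
    ext i j
    have h1 := (Finset.sum_eq_zero_iff_of_nonneg
      (fun i _ => Finset.sum_nonneg fun j _ => abs_nonneg (A₂ i j))).mp hz i (Finset.mem_univ i)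
    have h2 := (Finset.sum_eq_zero_iff_of_nonneg (fun j _ => abs_nonneg (A₂ i j))).mp h1 j
      (Finset.mem_univ j)
    simpa using abs_eq_zero.mp h2
  set e : Fin k → ℤ := Pi.single ⟨0, by omega⟩ 1 with he
  have hene : e ≠ 0 := by
    intro hc
    have := congrFun hc ⟨0, by omega⟩
    simp [he] at this
  have h1 := qf_pos A₂ hA₂pos Q₂ hQ₂ e hene
  have h2 : 2 * Q₂ e = 0 := by
    rw [hQ₂ e, h0]
    simp
  omega
end QF

set_option maxHeartbeats 1000000 in
/-- necessity of condition (ii) for `(ℓ^p, ℓ^q)` boundedness of `J_{Q₁,Q₂,λ}`,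
with exponents `1 ≤ p, q ≤ ∞` taken in `ℝ≥0∞`. -/
theorem discrete_fractional_radon_necessary_ii
    (k : ℕ) (hk : 1 ≤ k)
    (A₁ A₂ : Matrix (Fin k) (Fin k) ℤ)
    (hA₁symm : A₁.IsSymm) (hA₂symm : A₂.IsSymm)
    (hA₁pos : (A₁.map ((↑) : ℤ → ℝ)).PosDef)
    (hA₂pos : (A₂.map ((↑) : ℤ → ℝ)).PosDef)
    (hA₁even : ∀ i, 2 ∣ A₁ i i) (hA₂even : ∀ i, 2 ∣ A₂ i i)
    (Q₁ Q₂ : (Fin k → ℤ) → ℤ)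
    (hQ₁ : ∀ x, 2 * Q₁ x = x ⬝ᵥ A₁.mulVec x)
    (hQ₂ : ∀ x, 2 * Q₂ x = x ⬝ᵥ A₂.mulVec x)
    (lam : ℝ) (hlam₀ : 0 < lam) (hlam₁ : lam < 1)
    (p q : ℝ≥0∞) (hp₁ : 1 ≤ p) (hq₁ : 1 ≤ q)
    (hbound : ∃ A : ℝ≥0, ∀ f : ((Fin k → ℤ) × ℤ) → ℂ, (Function.support f).Finite →
      eLpNorm
        (fun nt : (Fin k → ℤ) × ℤ =>
          ∑' m : Fin k → ℤ,
            if m = 0 then 0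
            else f (nt.1 - m, nt.2 - Q₁ m) /
              Complex.ofReal ((Q₂ m : ℝ) ^ ((k : ℝ) * lam / 2)))
        q Measure.count
      ≤ (A : ℝ≥0∞) * eLpNorm f p Measure.count) :
    1 / q < ENNReal.ofReal lam ∧ 1 - ENNReal.ofReal lam < 1 / p := by
  obtain ⟨A, hA⟩ := hbound
  set ee : ℝ := (k:ℝ) * lam / 2 with hee
  set C₀ : ℤ := ∑ i, ∑ j, |A₂ i j| with hC₀def
  have hC₀ : 1 ≤ C₀ := qf_C_pos hk A₂ hA₂pos Q₂ hQ₂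
  have hCr : (1:ℝ) ≤ (C₀:ℝ) := by exact_mod_cast hC₀
  have hQpos : ∀ m : Fin k → ℤ, m ≠ 0 → (1:ℝ) ≤ (Q₂ m : ℝ) := by
    intro m hm
    exact_mod_cast qf_pos A₂ hA₂pos Q₂ hQ₂ m hm
  have hQub : ∀ (j : ℕ) (m : Fin k → ℤ), m ∈ shell k j →
      (Q₂ m : ℝ) ≤ (C₀:ℝ) * (2:ℝ) ^ (2*((j:ℝ)+1)) := by
    intro j m hm
    have h1 : Q₂ m ≤ C₀ * (2^(j+1))^2 :=
      qf_ub hk A₂ hA₂pos Q₂ hQ₂ m (shell_ne_zero hk hm) _ (shell_abs_le hm)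
    have h2 : ((Q₂ m : ℝ)) ≤ (C₀:ℝ) * ((2:ℝ)^(j+1))^2 := by exact_mod_cast h1
    refine le_trans h2 ?_
    have : ((2:ℝ)^(j+1))^2 = (2:ℝ) ^ (2*((j:ℝ)+1)) := by
      rw [← Real.rpow_natCast (2:ℝ) (j+1), ← Real.rpow_natCast _ 2,
        ← Real.rpow_mul (by norm_num : (0:ℝ) ≤ 2)]
      push_cast
      ring_nf
    rw [this]
  constructor
  · -- Part (i): 1/q < ofReal lam
    by_contra hq
    push_neg at hq
    have hq0 : q ≠ 0 := fun h => by simp [h] at hq₁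
    have hqt : q ≠ ∞ := by
      intro h
      rw [h] at hq
      simp only [ENNReal.div_top, nonpos_iff_eq_zero, ENNReal.ofReal_eq_zero] at hq
      linarith
    set r : ℝ := q.toReal with hr
    have hr1 : 1 ≤ r := by
      rw [hr, ← ENNReal.toReal_one]
      exact ENNReal.toReal_mono hqt hq₁
    have hr0 : 0 < r := lt_of_lt_of_le one_pos hr1
    have hlamr : lam * r ≤ 1 := by
      have h1 : ENNReal.ofReal lam ≤ q⁻¹ := by rwa [one_div] at hq
      have h2 : lam ≤ (q⁻¹).toReal := by
        have := ENNReal.toReal_mono (ENNReal.inv_ne_top.mpr hq0) h1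
        rwa [ENNReal.toReal_ofReal hlam₀.le] at this
      rw [ENNReal.toReal_inv] at h2
      calc lam * r ≤ r⁻¹ * r := by
            apply mul_le_mul_of_nonneg_right h2 hr0.le
        _ = 1 := inv_mul_cancel₀ hr0.ne'
    -- test function
    set f₀ : ((Fin k → ℤ) × ℤ) → ℂ :=
      fun x => if x = ((0 : Fin k → ℤ), (0:ℤ)) then 1 else 0 with hf₀
    have hf₀fin : (Function.support f₀).Finite := by
      apply Set.Finite.subset (Set.finite_singleton ((0 : Fin k → ℤ), (0:ℤ)))
      intro x hx
      rw [Function.mem_support, hf₀] at hx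
      simp only [ne_eq, ite_eq_right_iff, one_ne_zero, imp_false, not_not] at hx
      exact hx
    have hf₀norm : eLpNorm f₀ p Measure.count ≤ 1 := by
      have heq : f₀ = Set.indicator {((0 : Fin k → ℤ), (0:ℤ))} (fun _ => (1:ℂ)) := by
        funext x
        simp [hf₀, Set.indicator_apply]
      rw [heq]
      refine le_trans (eLpNorm_indicator_const_le _ _) ?_
      rw [Measure.count_singleton, ENNReal.one_rpow, enorm_one, mul_one]
    have hmain := hA f₀ hf₀fin
    set G : ((Fin k → ℤ) × ℤ) → ℂ := fun nt =>
      ∑' m : Fin k → ℤ,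
        if m = 0 then 0
        else f₀ (nt.1 - m, nt.2 - Q₁ m) /
          Complex.ofReal ((Q₂ m : ℝ) ^ ee) with hG
    have hGval : ∀ n : Fin k → ℤ, n ≠ 0 →
        G (n, Q₁ n) = 1 / Complex.ofReal ((Q₂ n : ℝ) ^ ee) := by
      intro n hn
      rw [hG]
      simp only
      rw [tsum_eq_single n ?_]
      · simp [hf₀, hn]
      · intro m hmn
        have h1 : n - m ≠ 0 := sub_ne_zero.mpr (Ne.symm hmn)
        have h2 : f₀ (n - m, Q₁ n - Q₁ m) = 0 := by
          rw [hf₀]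
          simp only [Prod.mk.injEq, ite_eq_right_iff, one_ne_zero]
          intro hc
          exact absurd hc.1 h1
        rw [h2, zero_div]
        simp
    set dlt : ℝ := (C₀:ℝ) ^ (-((k:ℝ)*r/2)) * (2:ℝ) ^ (-(k:ℝ)) with hdlt
    have hdltpos : 0 < dlt := by
      rw [hdlt]
      positivity
    have hlow : ∀ J : ℕ, (J : ℝ≥0∞) * ENNReal.ofReal dlt
        ≤ ∑' x : (Fin k → ℤ) × ℤ, (‖G x‖₊ : ℝ≥0∞) ^ r := by
      intro J
      classical
      set T : ℕ → Finset ((Fin k → ℤ) × ℤ) :=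
        fun j => (shell k j).image (fun m => (m, Q₁ m)) with hT
      have hinj : Function.Injective (fun m : Fin k → ℤ => (m, Q₁ m)) :=
        fun a b h => congrArg Prod.fst h
      have hdisj : (↑(Finset.range J) : Set ℕ).PairwiseDisjoint T := by
        intro a _ b _ hab
        have : Disjoint (T a) (T b) := by
          rw [hT]
          simp only
          rw [Finset.disjoint_image hinj]
          exact shell_disjoint hk hab
        exact this
      calc (J : ℝ≥0∞) * ENNReal.ofReal dlt
          = ∑ _j ∈ Finset.range J, ENNReal.ofReal dlt := by
            rw [Finset.sum_const, Finset.card_range, nsmul_eq_mul]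
        _ ≤ ∑ j ∈ Finset.range J, ∑ x ∈ T j, (‖G x‖₊ : ℝ≥0∞) ^ r := by
            apply Finset.sum_le_sum
            intro j _
            rw [hT]
            simp only
            rw [Finset.sum_image (fun a _ b _ h => hinj h)]
            have hcard : (shell k j).card •
                ENNReal.ofReal ((C₀:ℝ) ^ (-((k:ℝ)*r/2)) * (2:ℝ) ^ (-(((j:ℝ)+1)*(k:ℝ))))
                ≤ ∑ m ∈ shell k j, (‖G (m, Q₁ m)‖₊ : ℝ≥0∞) ^ r := by
              apply Finset.card_nsmul_le_sum
              intro m hm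
              have hm0 := shell_ne_zero hk hm
              have ht1 := hQpos m hm0
              have ht0 : (0:ℝ) < (Q₂ m : ℝ) := lt_of_lt_of_le one_pos ht1
              have hGv := hGval m hm0
              have hnorm : ‖G (m, Q₁ m)‖ = (Q₂ m : ℝ) ^ (-ee) := by
                rw [hGv, norm_div, norm_one, Complex.norm_real, Real.norm_eq_abs,
                  abs_of_pos (Real.rpow_pos_of_pos ht0 ee), Real.rpow_neg ht0.le, one_div]
              have heq2 : (‖G (m, Q₁ m)‖₊ : ℝ≥0∞) ^ r
                  = ENNReal.ofReal ((Q₂ m : ℝ) ^ (-(ee*r))) := by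
                rw [← enorm_eq_nnnorm, ← ofReal_norm_eq_enorm, hnorm,
                  ENNReal.ofReal_rpow_of_nonneg (Real.rpow_nonneg ht0.le _) hr0.le,
                  ← Real.rpow_mul ht0.le, neg_mul]
              rw [heq2]
              apply ENNReal.ofReal_le_ofReal
              have hkey := rpow_shell_lower (C := (C₀:ℝ)) (t := (Q₂ m : ℝ))
                (s₁ := ee*r) (s₂ := (k:ℝ)*r/2) (e₁ := 2*((j:ℝ)+1)) (e₂ := ((j:ℝ)+1)*(k:ℝ))
                hCr ht1 (hQub j m hm) (by rw [hee]; positivity)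
                (by rw [hee]
                    nlinarith [mul_nonneg (mul_nonneg (Nat.cast_nonneg k : (0:ℝ) ≤ k) hr0.le)
                      (sub_nonneg.mpr hlam₁.le)])
                (by rw [hee]
                    nlinarith [mul_nonneg (by positivity : (0:ℝ) ≤ ((j:ℝ)+1)*(k:ℝ))
                      (sub_nonneg.mpr hlamr)])
              exact hkey
            refine le_trans ?_ hcard
            rw [shell_card, nsmul_eq_mul, ← ENNReal.ofReal_natCast,
              ← ENNReal.ofReal_mul (by positivity)]
            apply ENNReal.ofReal_le_ofReal
            have h2jk : ((2^(j*k) : ℕ) : ℝ) * (2:ℝ) ^ (-(((j:ℝ)+1)*(k:ℝ))) = (2:ℝ) ^ (-(k:ℝ)) := by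
              rw [show ((2^(j*k) : ℕ) : ℝ) = (2:ℝ) ^ ((j*k : ℕ):ℝ) by
                rw [Real.rpow_natCast]; push_cast; ring]
              rw [← Real.rpow_add two_pos]
              congr 1
              push_cast
              ring
            apply le_of_eq
            rw [hdlt, ← h2jk]
            ring
        _ = ∑ x ∈ (Finset.range J).biUnion T, (‖G x‖₊ : ℝ≥0∞) ^ r :=
            (Finset.sum_biUnion hdisj).symm
        _ ≤ ∑' x : (Fin k → ℤ) × ℤ, (‖G x‖₊ : ℝ≥0∞) ^ r := ENNReal.sum_le_tsum _
    have htop : (∑' x : (Fin k → ℤ) × ℤ, (‖G x‖₊ : ℝ≥0∞) ^ r) = ⊤ := by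
      by_contra ht
      have hδ : 0 < ENNReal.ofReal dlt := ENNReal.ofReal_pos.mpr hdltpos
      obtain ⟨J, hJ⟩ := ENNReal.exists_nat_gt
        (ENNReal.div_lt_top ht hδ.ne').ne
      rw [ENNReal.div_lt_iff (Or.inl hδ.ne') (Or.inl ENNReal.ofReal_ne_top)] at hJ
      exact lt_irrefl _ (lt_of_lt_of_le hJ (hlow J))
    have hGtop : eLpNorm G q Measure.count = ⊤ := by
      rw [eLpNorm_count_eq G hq0 hqt, ← hr, htop]
      exact ENNReal.top_rpow_of_pos (by positivity)
    rw [hGtop] at hmain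
    have hfin : (⊤:ℝ≥0∞) ≤ (A : ℝ≥0∞) := by
      refine le_trans hmain ?_
      calc (A : ℝ≥0∞) * eLpNorm f₀ p Measure.count ≤ (A:ℝ≥0∞) * 1 :=
            mul_le_mul_right hf₀norm _
        _ = (A:ℝ≥0∞) := mul_one _
    rw [top_le_iff] at hfin
    exact ENNReal.coe_ne_top hfin
  · -- Part (ii): 1 - ofReal lam < 1/p
    classical
    set i₀ : Fin k := ⟨0, hk⟩ with hi₀
    set U : ℕ → Finset (Fin k → ℤ) := fun J => (Finset.range J).biUnion (shell k) with hU
    set a : (Fin k → ℤ) → ℝ := fun m => ((m i₀ : ℝ)) ^ (-((k:ℝ)*(1-lam))) with ha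
    set F : ℕ → ((Fin k → ℤ) × ℤ) → ℂ := fun J x =>
      if -x.1 ∈ U J ∧ x.2 = - Q₁ (-x.1) then Complex.ofReal (a (-x.1)) else 0 with hF
    have hUne : ∀ J (m : Fin k → ℤ), m ∈ U J → m ≠ 0 := by
      intro J m hm
      rw [hU] at hm
      simp only [Finset.mem_biUnion, Finset.mem_range] at hm
      obtain ⟨j, _, hj⟩ := hm
      exact shell_ne_zero hk hj
    have hUdisj : ∀ J, (↑(Finset.range J) : Set ℕ).PairwiseDisjoint (shell k) := by
      intro J x _ y _ hxy
      exact shell_disjoint hk hxy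
    have hFval : ∀ J (m : Fin k → ℤ), F J (-m, -Q₁ m)
        = if m ∈ U J then Complex.ofReal (a m) else 0 := by
      intro J m
      rw [hF]
      show (if -(-m) ∈ U J ∧ -Q₁ m = - Q₁ (-(-m)) then Complex.ofReal (a (-(-m))) else 0) = _
      simp only [neg_neg, and_true]
    -- support of F J is finite
    have hFfin : ∀ J, (Function.support (F J)).Finite := by
      intro J
      apply Set.Finite.subset (((U J).image (fun m => (-m, -Q₁ m))).finite_toSet)
      intro x hx
      rw [Function.mem_support, hF] at hx
      simp only [ne_eq, ite_eq_right_iff, not_forall] at hx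
      obtain ⟨⟨h1, h2⟩, _⟩ := hx
      simp only [Finset.coe_image, Set.mem_image, Finset.mem_coe]
      exact ⟨-x.1, h1, by rw [neg_neg, ← h2]⟩
    -- the transform value at the origin
    set c : ℝ := (C₀:ℝ) ^ (-ee) * (2:ℝ) ^ (-(k:ℝ)) with hc
    have hcpos : 0 < c := by rw [hc]; positivity
    have hsummand : ∀ J (m : Fin k → ℤ),
        (if m = 0 then 0
          else F J (((0:Fin k → ℤ),(0:ℤ)).1 - m, ((0:Fin k → ℤ),(0:ℤ)).2 - Q₁ m) /
            Complex.ofReal ((Q₂ m : ℝ) ^ ee))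
        = if m ∈ U J then Complex.ofReal (a m / (Q₂ m : ℝ) ^ ee) else 0 := by
      intro J m
      have hzs : ((0:Fin k → ℤ),(0:ℤ)).1 - m = -m := zero_sub m
      have hzs2 : ((0:Fin k → ℤ),(0:ℤ)).2 - Q₁ m = -Q₁ m := zero_sub (Q₁ m)
      rw [hzs, hzs2, hFval J m]
      by_cases hm : m ∈ U J
      · rw [if_pos hm, if_neg (hUne J m hm), if_pos hm, Complex.ofReal_div]
      · rw [if_neg hm]
        by_cases hm0 : m = 0
        · rw [if_pos hm0, if_neg hm]
        · rw [if_neg hm0, zero_div, if_neg hm]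
    set S : ℕ → ℝ := fun J => ∑ m ∈ U J, a m / (Q₂ m : ℝ) ^ ee with hS
    have hStsum : ∀ J, (∑' m : Fin k → ℤ,
        if m = 0 then 0
        else F J (((0:Fin k → ℤ),(0:ℤ)).1 - m, ((0:Fin k → ℤ),(0:ℤ)).2 - Q₁ m) /
          Complex.ofReal ((Q₂ m : ℝ) ^ ee)) = Complex.ofReal (S J) := by
      intro J
      have h1 : ∀ m ∉ U J,
          (if m = 0 then 0
            else F J (((0:Fin k → ℤ),(0:ℤ)).1 - m, ((0:Fin k → ℤ),(0:ℤ)).2 - Q₁ m) /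
              Complex.ofReal ((Q₂ m : ℝ) ^ ee)) = 0 := by
        intro m hm
        rw [hsummand J m, if_neg hm]
      calc (∑' m : Fin k → ℤ, _) = ∑ m ∈ U J,
            (if m = 0 then 0
              else F J (((0:Fin k → ℤ),(0:ℤ)).1 - m, ((0:Fin k → ℤ),(0:ℤ)).2 - Q₁ m) /
                Complex.ofReal ((Q₂ m : ℝ) ^ ee)) := tsum_eq_sum h1
        _ = ∑ m ∈ U J, Complex.ofReal (a m / (Q₂ m : ℝ) ^ ee) := by
            apply Finset.sum_congr rfl
            intro m hm
            rw [hsummand J m, if_pos hm]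
        _ = Complex.ofReal (S J) := by rw [hS]; push_cast; ring
    -- lower bound on S J
    have hSlb : ∀ J : ℕ, (J:ℝ) * c ≤ S J := by
      intro J
      rw [hS]
      simp only
      rw [hU]
      simp only
      rw [Finset.sum_biUnion (hUdisj J)]
      calc (J:ℝ) * c = ∑ _j ∈ Finset.range J, c := by
            rw [Finset.sum_const, Finset.card_range, nsmul_eq_mul]
        _ ≤ ∑ j ∈ Finset.range J, ∑ m ∈ shell k j, a m / (Q₂ m : ℝ) ^ ee := by
            apply Finset.sum_le_sum
            intro j _
            have hbd : ∀ m ∈ shell k j,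
                (C₀:ℝ) ^ (-ee) * (2:ℝ) ^ (-(((j:ℝ)+1)*(k:ℝ))) ≤ a m / (Q₂ m : ℝ) ^ ee := by
              intro m hm
              have hm0 := shell_ne_zero hk hm
              have ht1 := hQpos m hm0
              have ht0 : (0:ℝ) < (Q₂ m : ℝ) := lt_of_lt_of_le one_pos ht1
              have hx1 : (1:ℝ) ≤ (m i₀ : ℝ) := by
                have := shell_pos hm i₀
                exact_mod_cast this
              have hxub : (m i₀ : ℝ) ≤ (2:ℝ) ^ ((j:ℝ)+1) := by
                have h1 : m i₀ ≤ 2^(j+1) := (mem_shell.mp hm i₀).2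
                have h2 : (m i₀ : ℝ) ≤ ((2:ℝ))^(j+1) := by exact_mod_cast h1
                rwa [← Real.rpow_natCast (2:ℝ) (j+1), Nat.cast_add, Nat.cast_one] at h2
              have h1 : (2:ℝ) ^ (-(((j:ℝ)+1)*((k:ℝ)*(1-lam)))) ≤ (m i₀ : ℝ) ^ (-((k:ℝ)*(1-lam))) := by
                have := rpow_shell_lower (C := 1) (t := (m i₀ : ℝ))
                  (s₁ := (k:ℝ)*(1-lam)) (s₂ := (k:ℝ)*(1-lam))
                  (e₁ := (j:ℝ)+1) (e₂ := ((j:ℝ)+1)*((k:ℝ)*(1-lam)))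
                  le_rfl hx1 (by rw [one_mul]; exact hxub)
                  (by nlinarith [Nat.cast_nonneg (α := ℝ) k]) le_rfl le_rfl
                simpa [Real.one_rpow] using this
              have h2 : (C₀:ℝ) ^ (-ee) * (2:ℝ) ^ (-(2*((j:ℝ)+1)*ee)) ≤ (Q₂ m : ℝ) ^ (-ee) := by
                exact rpow_shell_lower (C := (C₀:ℝ)) (t := (Q₂ m : ℝ))
                  (s₁ := ee) (s₂ := ee) (e₁ := 2*((j:ℝ)+1)) (e₂ := 2*((j:ℝ)+1)*ee)
                  hCr ht1 (hQub j m hm) (by rw [hee]; positivity) le_rfl le_rfl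
              have hcomb : (2:ℝ) ^ (-(((j:ℝ)+1)*((k:ℝ)*(1-lam))))
                  * ((C₀:ℝ) ^ (-ee) * (2:ℝ) ^ (-(2*((j:ℝ)+1)*ee)))
                  = (C₀:ℝ) ^ (-ee) * (2:ℝ) ^ (-(((j:ℝ)+1)*(k:ℝ))) := by
                rw [mul_left_comm, ← Real.rpow_add two_pos]
                congr 2
                rw [hee]
                ring
              calc (C₀:ℝ) ^ (-ee) * (2:ℝ) ^ (-(((j:ℝ)+1)*(k:ℝ)))
                  = (2:ℝ) ^ (-(((j:ℝ)+1)*((k:ℝ)*(1-lam))))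
                    * ((C₀:ℝ) ^ (-ee) * (2:ℝ) ^ (-(2*((j:ℝ)+1)*ee))) := hcomb.symm
                _ ≤ (m i₀ : ℝ) ^ (-((k:ℝ)*(1-lam))) * (Q₂ m : ℝ) ^ (-ee) :=
                    mul_le_mul h1 h2 (by positivity)
                      (Real.rpow_nonneg (by linarith : (0:ℝ) ≤ (m i₀ : ℝ)) _)
                _ = a m / (Q₂ m : ℝ) ^ ee := by
                    rw [ha]
                    simp only
                    rw [Real.rpow_neg ht0.le, div_eq_mul_inv]
            have := Finset.card_nsmul_le_sum (shell k j)
              (fun m => a m / (Q₂ m : ℝ) ^ ee)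
              ((C₀:ℝ) ^ (-ee) * (2:ℝ) ^ (-(((j:ℝ)+1)*(k:ℝ)))) hbd
            rw [shell_card, nsmul_eq_mul] at this
            refine le_trans (le_of_eq ?_) this
            rw [hc, ← two_pow_mul j k]
            ring
    -- upper bound on values of a
    have ha1 : ∀ J (m : Fin k → ℤ), m ∈ U J → a m ≤ 1 := by
      intro J m hm
      rw [hU] at hm
      simp only [Finset.mem_biUnion, Finset.mem_range] at hm
      obtain ⟨j, _, hj⟩ := hm
      have hx1 : (1:ℝ) ≤ (m i₀ : ℝ) := by
        have := shell_pos hj i₀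
        exact_mod_cast this
      rw [ha]
      exact Real.rpow_le_one_of_one_le_of_nonpos hx1
        (by nlinarith [Nat.cast_nonneg (α := ℝ) k])
    have hbase1 : ∀ J (m : Fin k → ℤ), m ∈ U J → (1:ℝ) ≤ (m i₀ : ℝ) := by
      intro J m hm
      rw [hU] at hm
      simp only [Finset.mem_biUnion, Finset.mem_range] at hm
      obtain ⟨j, _, hj⟩ := hm
      have := shell_pos hj i₀
      exact_mod_cast this
    have ha0 : ∀ J (m : Fin k → ℤ), m ∈ U J → 0 ≤ a m := by
      intro J m hm
      rw [ha]
      exact Real.rpow_nonneg (by linarith [hbase1 J m hm]) _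
    -- key chain giving ofReal (J * c) ≤ A * eLpNorm (F J) p count
    have hchain : ∀ J : ℕ, ENNReal.ofReal ((J:ℝ) * c)
        ≤ (A : ℝ≥0∞) * eLpNorm (F J) p Measure.count := by
      intro J
      have hmain := hA (F J) (hFfin J)
      refine le_trans ?_ hmain
      have hGpt := hStsum J
      calc ENNReal.ofReal ((J:ℝ) * c)
          ≤ ENNReal.ofReal (S J) := ENNReal.ofReal_le_ofReal (hSlb J)
        _ = (‖(Complex.ofReal (S J))‖₊ : ℝ≥0∞) := by
            rw [← enorm_eq_nnnorm, ← ofReal_norm_eq_enorm, Complex.norm_real, Real.norm_eq_abs,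
              abs_of_nonneg (le_trans (mul_nonneg (Nat.cast_nonneg J) hcpos.le) (hSlb J))]
        _ ≤ _ := by
            rw [← hGpt]
            exact point_le_eLpNorm _ (fun h => by simp [h] at hq₁) ((0:Fin k → ℤ),(0:ℤ))
    -- now split on p
    rcases eq_or_ne p ∞ with hpt | hpt
    · -- show False
      exfalso
      have hFle : ∀ J, eLpNorm (F J) p Measure.count ≤ 1 := by
        intro J
        rw [hpt]
        apply eLpNorm_top_le
        intro x
        rw [← enorm_eq_nnnorm, ← ofReal_norm_eq_enorm, hF]
        simp only
        by_cases hcond : -x.1 ∈ U J ∧ x.2 = - Q₁ (-x.1)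
        · rw [if_pos hcond]
          rw [Complex.norm_real, Real.norm_eq_abs, abs_of_nonneg (ha0 J _ hcond.1)]
          calc ENNReal.ofReal (a (-x.1)) ≤ ENNReal.ofReal 1 :=
                ENNReal.ofReal_le_ofReal (ha1 J _ hcond.1)
            _ = 1 := ENNReal.ofReal_one
        · rw [if_neg hcond]
          simp
      obtain ⟨J, hJ⟩ := exists_nat_gt ((A:ℝ) / c)
      have h1 : (A:ℝ) < (J:ℝ) * c := (div_lt_iff₀ hcpos).mp hJ
      have h2 : ENNReal.ofReal ((J:ℝ)*c) ≤ (A:ℝ≥0∞) := by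
        refine le_trans (hchain J) ?_
        calc (A : ℝ≥0∞) * eLpNorm (F J) p Measure.count ≤ (A:ℝ≥0∞) * 1 :=
              mul_le_mul_right (hFle J) _
          _ = (A:ℝ≥0∞) := mul_one _
      rw [← ENNReal.ofReal_coe_nnreal] at h2
      have h3 := (ENNReal.ofReal_le_ofReal_iff (NNReal.coe_nonneg A)).mp h2
      linarith
    · -- p finite
      by_contra hp2
      push_neg at hp2
      have hp0 : p ≠ 0 := fun h => by simp [h] at hp₁
      set pb : ℝ := p.toReal with hpb
      have hpb1 : 1 ≤ pb := by
        rw [hpb, ← ENNReal.toReal_one]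
        exact ENNReal.toReal_mono hpt hp₁
      have hpb0 : 0 < pb := lt_of_lt_of_le one_pos hpb1
      have hinv : pb⁻¹ ≤ 1 - lam := by
        have h1 : 1/p ≤ ENNReal.ofReal (1 - lam) := by
          rw [ENNReal.ofReal_sub 1 hlam₀.le, ENNReal.ofReal_one]
          exact hp2
        rw [one_div] at h1
        have h2 := ENNReal.toReal_mono ENNReal.ofReal_ne_top h1
        rw [ENNReal.toReal_inv, ENNReal.toReal_ofReal (by linarith)] at h2
        exact h2
      have hpbgt : 1 < pb := by
        by_contra hle
        push_neg at hle
        have : pb = 1 := le_antisymm hle hpb1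
        rw [this, inv_one] at hinv
        linarith
      have hkey : 1 ≤ (1-lam) * pb := by
        calc (1:ℝ) = pb⁻¹ * pb := (inv_mul_cancel₀ hpb0.ne').symm
          _ ≤ (1-lam) * pb := mul_le_mul_of_nonneg_right hinv hpb0.le
      -- upper bound for eLpNorm (F J) p
      have hFub : ∀ J : ℕ, eLpNorm (F J) p Measure.count ≤ (J : ℝ≥0∞) ^ (1/pb) := by
        intro J
        rw [eLpNorm_count_eq (F J) hp0 hpt, ← hpb]
        have htsum : (∑' x : (Fin k → ℤ) × ℤ, (‖F J x‖₊ : ℝ≥0∞) ^ pb) ≤ (J : ℝ≥0∞) := by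
          have hzero : ∀ x ∉ (U J).image (fun m => (-m, -Q₁ m)),
              (‖F J x‖₊ : ℝ≥0∞) ^ pb = 0 := by
            intro x hx
            have hFx : F J x = 0 := by
              rw [hF]
              simp only [ite_eq_right_iff]
              intro hcond
              exfalso
              apply hx
              rw [Finset.mem_image]
              refine ⟨-x.1, hcond.1, ?_⟩
              rw [neg_neg]
              exact Prod.ext rfl hcond.2.symm
            rw [hFx]
            simp only [nnnorm_zero, ENNReal.coe_zero]
            exact ENNReal.zero_rpow_of_pos hpb0
          rw [tsum_eq_sum hzero]
          have hinj2 : ∀ x ∈ U J, ∀ y ∈ U J,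
              (fun m : Fin k → ℤ => (-m, -Q₁ m)) x = (fun m : Fin k → ℤ => (-m, -Q₁ m)) y → x = y := by
            intro x _ y _ h
            have := congrArg Prod.fst h
            simpa using this
          rw [Finset.sum_image hinj2, hU]
          simp only
          rw [Finset.sum_biUnion (hUdisj J)]
          calc ∑ j ∈ Finset.range J, ∑ m ∈ shell k j, (‖F J (-m, -Q₁ m)‖₊ : ℝ≥0∞) ^ pb
              ≤ ∑ _j ∈ Finset.range J, 1 := by
                apply Finset.sum_le_sum
                intro j hj
                have hbd : ∀ m ∈ shell k j, (‖F J (-m, -Q₁ m)‖₊ : ℝ≥0∞) ^ pb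
                    ≤ ENNReal.ofReal ((2:ℝ) ^ (-((j:ℝ)*(k:ℝ)))) := by
                  intro m hm
                  have hmU : m ∈ U J := by
                    rw [hU]
                    simp only [Finset.mem_biUnion, Finset.mem_range]
                    exact ⟨j, Finset.mem_range.mp hj, hm⟩
                  have hval : F J (-m, -Q₁ m) = Complex.ofReal (a m) := by
                    rw [hFval J m, if_pos hmU]
                  have hnorm : ‖F J (-m, -Q₁ m)‖ = a m := by
                    rw [hval, Complex.norm_real, Real.norm_eq_abs,
                      abs_of_nonneg (ha0 J m hmU)]
                  have hx1 : (1:ℝ) ≤ (m i₀ : ℝ) := by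
                    have := shell_pos hm i₀
                    exact_mod_cast this
                  have hxlb : (2:ℝ) ^ ((j:ℝ)) ≤ (m i₀ : ℝ) := by
                    have h1 : (2:ℤ)^j ≤ m i₀ := le_of_lt (mem_shell.mp hm i₀).1
                    have h2 : ((2:ℝ))^j ≤ (m i₀ : ℝ) := by exact_mod_cast h1
                    rwa [← Real.rpow_natCast (2:ℝ) j] at h2
                  -- a m ≤ 2^(-j*k*(1-lam))
                  have hma : a m ≤ (2:ℝ) ^ (-((j:ℝ))*((k:ℝ)*(1-lam))) := by
                    rw [ha]
                    simp only
                    have h2pos : (0:ℝ) < (2:ℝ) ^ ((j:ℝ)) := Real.rpow_pos_of_pos two_pos _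
                    have := Real.rpow_le_rpow_of_nonpos h2pos hxlb
                      (by nlinarith [Nat.cast_nonneg (α := ℝ) k] :
                        -((k:ℝ)*(1-lam)) ≤ 0)
                    rw [← Real.rpow_mul (by norm_num : (0:ℝ) ≤ 2)] at this
                    calc ((m i₀ : ℝ)) ^ (-((k:ℝ)*(1-lam)))
                        ≤ (2:ℝ) ^ ((j:ℝ) * -((k:ℝ)*(1-lam))) := this
                      _ = (2:ℝ) ^ (-((j:ℝ))*((k:ℝ)*(1-lam))) := by ring_nf
                  have hfinal : (a m) ^ pb ≤ (2:ℝ) ^ (-((j:ℝ)*(k:ℝ))) := by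
                    calc (a m) ^ pb ≤ ((2:ℝ) ^ (-((j:ℝ))*((k:ℝ)*(1-lam)))) ^ pb :=
                          Real.rpow_le_rpow (ha0 J m hmU) hma hpb0.le
                      _ = (2:ℝ) ^ ((-((j:ℝ))*((k:ℝ)*(1-lam))) * pb) := by
                          rw [← Real.rpow_mul (by norm_num : (0:ℝ) ≤ 2)]
                      _ ≤ (2:ℝ) ^ (-((j:ℝ)*(k:ℝ))) := by
                          apply Real.rpow_le_rpow_of_exponent_le one_le_two
                          nlinarith [mul_nonneg (mul_nonneg (Nat.cast_nonneg (α := ℝ) j)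
                            (Nat.cast_nonneg (α := ℝ) k)) (sub_nonneg.mpr hkey),
                            mul_nonneg (Nat.cast_nonneg (α := ℝ) j) (Nat.cast_nonneg (α := ℝ) k)]
                  calc (‖F J (-m, -Q₁ m)‖₊ : ℝ≥0∞) ^ pb
                      = ENNReal.ofReal ((a m) ^ pb) := by
                        rw [← enorm_eq_nnnorm, ← ofReal_norm_eq_enorm, hnorm,
                          ENNReal.ofReal_rpow_of_nonneg (ha0 J m hmU) hpb0.le]
                    _ ≤ ENNReal.ofReal ((2:ℝ) ^ (-((j:ℝ)*(k:ℝ)))) :=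
                        ENNReal.ofReal_le_ofReal hfinal
                calc ∑ m ∈ shell k j, (‖F J (-m, -Q₁ m)‖₊ : ℝ≥0∞) ^ pb
                    ≤ (shell k j).card • ENNReal.ofReal ((2:ℝ) ^ (-((j:ℝ)*(k:ℝ)))) :=
                      Finset.sum_le_card_nsmul _ _ _ hbd
                  _ = 1 := by
                      rw [shell_card, nsmul_eq_mul, ← ENNReal.ofReal_natCast,
                        ← ENNReal.ofReal_mul (by positivity), two_pow_mul' j k,
                        ENNReal.ofReal_one]
              _ = (J : ℝ≥0∞) := by
                rw [Finset.sum_const, Finset.card_range, nsmul_eq_mul, mul_one]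
        exact ENNReal.rpow_le_rpow htsum (by positivity)
      -- combine: real inequality
      have hreal : ∀ J : ℕ, (J:ℝ) * c ≤ (A:ℝ) * (J:ℝ) ^ (1/pb) := by
        intro J
        have h1 := le_trans (hchain J) (mul_le_mul_right (hFub J) _)
        have h2 : (A:ℝ≥0∞) * (J : ℝ≥0∞) ^ (1/pb)
            = ENNReal.ofReal ((A:ℝ) * (J:ℝ) ^ (1/pb)) := by
          rw [ENNReal.ofReal_mul A.coe_nonneg, ENNReal.ofReal_coe_nnreal,
            ← ENNReal.ofReal_rpow_of_nonneg (Nat.cast_nonneg J) (by positivity),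
            ENNReal.ofReal_natCast]
        rw [h2] at h1
        exact (ENNReal.ofReal_le_ofReal_iff (by positivity)).mp h1
      -- contradiction by taking J large
      set exq : ℝ := 1 - 1/pb with hex
      have hexpos : 0 < exq := by
        rw [hex]
        have : 1/pb < 1 := by
          rw [one_div]
          exact inv_lt_one_of_one_lt₀ hpbgt
        linarith
      obtain ⟨J, hJ⟩ := exists_nat_gt (max 1 ((((A:ℝ)/c) + 1) ^ (1/exq)))
      have hJ1 : (1:ℝ) ≤ (J:ℝ) := le_of_lt (lt_of_le_of_lt (le_max_left _ _) hJ)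
      have hJ0 : (0:ℝ) < (J:ℝ) := lt_of_lt_of_le one_pos hJ1
      have hJb : (((A:ℝ)/c) + 1) ^ (1/exq) < (J:ℝ) := lt_of_le_of_lt (le_max_right _ _) hJ
      have hbase : (0:ℝ) ≤ ((A:ℝ)/c) + 1 := by positivity
      have hJex : ((A:ℝ)/c) + 1 < (J:ℝ) ^ exq := by
        calc ((A:ℝ)/c) + 1 = ((((A:ℝ)/c) + 1) ^ (1/exq)) ^ exq := by
              rw [← Real.rpow_mul hbase, one_div, inv_mul_cancel₀ hexpos.ne', Real.rpow_one]
          _ < (J:ℝ) ^ exq := Real.rpow_lt_rpow (by positivity) hJb hexpos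
      -- from hreal: J^exq * c ≤ A
      have hsplit : (J:ℝ) = (J:ℝ) ^ (1/pb) * (J:ℝ) ^ exq := by
        rw [← Real.rpow_add hJ0, hex, show 1/pb + (1 - 1/pb) = 1 by ring, Real.rpow_one]
      have h5 : (J:ℝ) ^ exq * c ≤ (A:ℝ) := by
        have hpos : 0 < (J:ℝ) ^ (1/pb) := Real.rpow_pos_of_pos hJ0 _
        rw [← mul_le_mul_iff_right₀ hpos]
        calc (J:ℝ) ^ (1/pb) * ((J:ℝ) ^ exq * c)
            = ((J:ℝ) ^ (1/pb) * (J:ℝ) ^ exq) * c := by ring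
          _ = (J:ℝ) * c := by rw [← hsplit]
          _ ≤ (A:ℝ) * (J:ℝ) ^ (1/pb) := hreal J
          _ = (J:ℝ) ^ (1/pb) * (A:ℝ) := by ring
      have h6 : (A:ℝ) < (J:ℝ) ^ exq * c := by
        have hmul := mul_lt_mul_of_pos_right hJex hcpos
        rw [add_mul, div_mul_cancel₀ _ hcpos.ne', one_mul] at hmul
        exact lt_of_le_of_lt (le_add_of_nonneg_right hcpos.le) hmul
      exact absurd h5 (not_le.mpr h6)
end
end

section
/- Let k ≥ 1 and let Q(x) = (1/2) xᵗ A x be a positive definite integral quadratic form in k variables. Then for all integers q ≥ 1 and a with gcd(a,q) = 1, and all b ∈ ℤ^k, the Gauss sum satisfies |S_Q(a,b;q)| ≤ (det A)^{k/2} q^{k/2}. -/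
open Matrix
open scoped NNReal

noncomputable section

namespace GaussAux

def chi (q m : ℤ) : ℂ :=
  Complex.exp ((-2 : ℂ) * Real.pi * Complex.I * (m : ℂ) / (q : ℂ))

lemma qC_ne {q : ℤ} (hq : 1 ≤ q) : (q : ℂ) ≠ 0 :=
  Int.cast_ne_zero.mpr (by omega)

lemma chi_add {q : ℤ} (hq : 1 ≤ q) (m m' : ℤ) :
    chi q (m + m') = chi q m * chi q m' := by
  have h := qC_ne hq
  rw [chi, chi, chi, ← Complex.exp_add]
  congr 1
  push_cast
  field_simp
  ring

lemma chi_zero (q : ℤ) : chi q 0 = 1 := by simp [chi]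

lemma chi_dvd {q : ℤ} (hq : 1 ≤ q) (m : ℤ) (h : q ∣ m) : chi q m = 1 := by
  obtain ⟨t, rfl⟩ := h
  have hq' := qC_ne hq
  rw [chi]
  have heq : (-2 : ℂ) * Real.pi * Complex.I * ((q * t : ℤ) : ℂ) / (q : ℂ)
      = (-t : ℤ) * (2 * Real.pi * Complex.I) := by
    rw [div_eq_iff hq']
    push_cast
    ring
  rw [heq, Complex.exp_int_mul_two_pi_mul_I]

lemma chi_norm {q : ℤ} (m : ℤ) : ‖chi q m‖ = 1 := by
  have heq : ((-2 : ℂ) * Real.pi * Complex.I * (m : ℂ) / (q : ℂ))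
      = ((-2 * Real.pi * m / q : ℝ) : ℂ) * Complex.I := by
    push_cast
    ring
  rw [chi, heq, Complex.norm_exp_ofReal_mul_I]

lemma chi_conj {q : ℤ} (m : ℤ) : (starRingEnd ℂ) (chi q m) = chi q (-m) := by
  rw [chi, chi, ← Complex.exp_conj]
  congr 1
  simp [map_div₀, Complex.conj_I, map_ofNat]

lemma chi_pow {q : ℤ} (hq : 1 ≤ q) (m : ℤ) (t : ℕ) : chi q (m * t) = chi q m ^ t := by
  induction t with
  | zero => simp [chi_zero]
  | succ n ih =>
      have heq : m * ((n : ℕ) + 1 : ℤ) = m * n + m := by ring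
      push_cast
      rw [heq, chi_add hq, ih, pow_succ]

lemma chi_ne_one {q : ℤ} (hq : 1 ≤ q) (m : ℤ) (h : ¬ q ∣ m) : chi q m ≠ 1 := by
  intro hc
  rw [chi, Complex.exp_eq_one_iff] at hc
  obtain ⟨t, ht⟩ := hc
  have hq' := qC_ne hq
  rw [div_eq_iff hq'] at ht
  have hc2 : (2 * (Real.pi : ℂ) * Complex.I) ≠ 0 := by
    have hπ : (Real.pi : ℂ) ≠ 0 := Complex.ofReal_ne_zero.mpr Real.pi_ne_zero
    have hI := Complex.I_ne_zero
    simp [hπ, hI]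
  have h1 : (2 * (Real.pi : ℂ) * Complex.I) * (-m : ℂ)
      = (2 * (Real.pi : ℂ) * Complex.I) * ((t * q : ℤ) : ℂ) := by
    push_cast
    linear_combination ht
  have h2 := mul_left_cancel₀ hc2 h1
  have h3 : -m = t * q := by exact_mod_cast h2
  exact h ⟨-t, by linarith⟩

lemma chi_congr {q : ℤ} (hq : 1 ≤ q) (m m' : ℤ) (h : q ∣ m - m') : chi q m = chi q m' := by
  have heq : m = m' + (m - m') := by ring
  rw [heq, chi_add hq, chi_dvd hq _ h, mul_one]

lemma chi_sum_zmod {q : ℤ} (hq : 1 ≤ q) (m : ℤ) :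
    haveI : NeZero q.toNat := ⟨by omega⟩
    ∑ x : ZMod q.toNat, chi q (m * ((x.val : ℕ) : ℤ)) = if q ∣ m then (q : ℂ) else 0 := by
  haveI : NeZero q.toNat := ⟨by omega⟩
  have hnq : ((q.toNat : ℕ) : ℤ) = q := Int.toNat_of_nonneg (by omega)
  have step1 : ∑ x : ZMod q.toNat, chi q (m * ((x.val : ℕ) : ℤ))
      = ∑ t ∈ Finset.range q.toNat, chi q (m * (t : ℤ)) := by
    apply Finset.sum_bij (fun (x : ZMod q.toNat) _ => x.val)
    · intro x _; exact Finset.mem_range.mpr (ZMod.val_lt x)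
    · intro x _ y _ h; exact ZMod.val_injective _ h
    · intro t ht
      exact ⟨(t : ZMod q.toNat), Finset.mem_univ _,
        ZMod.val_cast_of_lt (Finset.mem_range.mp ht)⟩
    · intro x _; rfl
  rw [step1]
  have step2 : ∀ t ∈ Finset.range q.toNat, chi q (m * (t : ℤ)) = chi q m ^ t := by
    intro t _; exact chi_pow hq m t
  rw [Finset.sum_congr rfl step2]
  by_cases h : q ∣ m
  · have : chi q m = 1 := chi_dvd hq m h
    rw [if_pos h]
    simp only [this, one_pow, Finset.sum_const, Finset.card_range, nsmul_eq_mul, mul_one]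
    exact_mod_cast hnq
  · rw [if_neg h, geom_sum_eq (chi_ne_one hq m h)]
    have hpow : chi q m ^ q.toNat = 1 := by
      rw [← chi_pow hq, hnq]
      exact chi_dvd hq _ ⟨m, mul_comm m q⟩
    rw [hpow]
    simp

lemma quad_add {k : ℕ} (A : Matrix (Fin k) (Fin k) ℤ) (hAsymm : A.IsSymm)
    (Q : (Fin k → ℤ) → ℤ) (hQ : ∀ x, 2 * Q x = x ⬝ᵥ A.mulVec x) (x d : Fin k → ℤ) :
    Q (x + d) = Q x + Q d + x ⬝ᵥ A.mulVec d := by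
  have h := hQ (x + d)
  have hx := hQ x
  have hd := hQ d
  have hsym : d ⬝ᵥ A.mulVec x = x ⬝ᵥ A.mulVec d := by
    rw [Matrix.dotProduct_mulVec, ← Matrix.mulVec_transpose, hAsymm.eq, dotProduct_comm]
  rw [Matrix.mulVec_add, dotProduct_add, add_dotProduct, add_dotProduct]
    at h
  omega

lemma dvd_dot {k : ℕ} (q : ℤ) (u v : Fin k → ℤ) (h : ∀ i, q ∣ u i) :
    q ∣ u ⬝ᵥ v :=
  Finset.dvd_sum fun i _ => (h i).mul_right _

lemma dvd_dot' {k : ℕ} (q : ℤ) (u v : Fin k → ℤ) (h : ∀ i, q ∣ v i) :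
    q ∣ u ⬝ᵥ v :=
  Finset.dvd_sum fun i _ => (h i).mul_left _

lemma dvd_mulVec {k : ℕ} (q : ℤ) (A : Matrix (Fin k) (Fin k) ℤ) (d : Fin k → ℤ)
    (h : ∀ i, q ∣ d i) : ∀ i, q ∣ A.mulVec d i :=
  fun i => dvd_dot' q _ d h

/-- if q divides every coordinate of d then q ∣ Q d -/
lemma dvd_Q {k : ℕ} (A : Matrix (Fin k) (Fin k) ℤ)
    (Q : (Fin k → ℤ) → ℤ) (hQ : ∀ x, 2 * Q x = x ⬝ᵥ A.mulVec x)
    (q : ℤ) (d : Fin k → ℤ) (h : ∀ i, q ∣ d i) : q ∣ Q d := by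
  have h2 : q * q ∣ d ⬝ᵥ A.mulVec d :=
    Finset.dvd_sum fun i _ => mul_dvd_mul (h i) (dvd_mulVec q A d h i)
  obtain ⟨m, hm⟩ := h2
  rw [← hQ d] at hm
  rcases Int.even_or_odd q with ⟨u, hu⟩ | ⟨u, hu⟩
  · refine ⟨u * m, ?_⟩
    have : 2 * Q d = 2 * (q * (u * m)) := by rw [hm, hu]; ring
    omega
  · -- q odd
    have hq2 : ¬ (2:ℤ) ∣ q := by omega
    have hdd : (2:ℤ) ∣ q * (q * m) := ⟨Q d, by linarith [hm]⟩
    have h2d : (2:ℤ) ∣ q * m := by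
      rcases (Int.prime_two.dvd_mul).mp hdd with h' | h'
      · exact absurd h' hq2
      · exact h'
    obtain ⟨w, hw⟩ := h2d
    refine ⟨w, ?_⟩
    have hc : 2 * Q d = 2 * (q * w) := by
      calc 2 * Q d = q * (q * m) := by rw [hm]; ring
        _ = q * (2 * w) := by rw [hw]
        _ = 2 * (q * w) := by ring
    omega

/-- main congruence: componentwise congruence mod q implies the phase is congruent -/
lemma f_congr {k : ℕ} (A : Matrix (Fin k) (Fin k) ℤ) (hAsymm : A.IsSymm)
    (Q : (Fin k → ℤ) → ℤ) (hQ : ∀ x, 2 * Q x = x ⬝ᵥ A.mulVec x)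
    (q a : ℤ) (b : Fin k → ℤ) (x y : Fin k → ℤ) (h : ∀ i, q ∣ x i - y i) :
    q ∣ (Q x * a + x ⬝ᵥ b) - (Q y * a + y ⬝ᵥ b) := by
  have hx : x = y + (x - y) := by ring
  rw [hx, quad_add A hAsymm Q hQ]
  have h1 : q ∣ Q (x - y) := dvd_Q A Q hQ q _ (fun i => by simpa using h i)
  have h2 : q ∣ y ⬝ᵥ A.mulVec (x - y) := dvd_dot' q _ _ (dvd_mulVec q A _ (fun i => by simpa using h i))
  have h3 : q ∣ (x - y) ⬝ᵥ b := dvd_dot q _ b (fun i => by simpa using h i)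
  have hxy : (y + (x - y)) ⬝ᵥ b = y ⬝ᵥ b + (x - y) ⬝ᵥ b := add_dotProduct _ _ _
  rw [hxy]
  obtain ⟨m1, e1⟩ := h1; obtain ⟨m2, e2⟩ := h2; obtain ⟨m3, e3⟩ := h3
  exact ⟨m1 * a + m2 * a + m3, by rw [e1, e2, e3]; ring⟩

lemma card_ker_le (n D : ℕ) (hn : 0 < n) (hD : 0 < D) :
    letI : NeZero n := ⟨hn.ne'⟩
    (Finset.univ.filter (fun x : ZMod n => (D : ZMod n) * x = 0)).card ≤ D := by
  letI : NeZero n := ⟨hn.ne'⟩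
  have hdvd : ∀ x : ZMod n, (D : ZMod n) * x = 0 → n ∣ D * x.val := by
    intro x hx
    rw [← ZMod.natCast_eq_zero_iff]
    push_cast
    rw [ZMod.natCast_rightInverse x]
    exact hx
  calc (Finset.univ.filter (fun x : ZMod n => (D : ZMod n) * x = 0)).card
      ≤ (Finset.range D).card := by
        apply Finset.card_le_card_of_injOn (fun x => D * x.val / n)
        · intro x hx
          have hv := ZMod.val_lt x
          exact Finset.mem_range.mpr ((Nat.div_lt_iff_lt_mul hn).mpr
            (by exact (Nat.mul_lt_mul_left hD).mpr hv))
        · intro x hx y hy hxy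
          simp only [Finset.coe_filter, Set.mem_setOf_eq, Finset.mem_univ, true_and] at hx hy
          have ex : D * x.val = n * (D * x.val / n) := (Nat.mul_div_cancel' (hdvd x hx)).symm
          have ey : D * y.val = n * (D * y.val / n) := (Nat.mul_div_cancel' (hdvd y hy)).symm
          have : D * x.val = D * y.val := by
            rw [ex, ey]
            simp only at hxy
            rw [hxy]
          exact ZMod.val_injective n (Nat.eq_of_mul_eq_mul_left hD this)
    _ = D := Finset.card_range D


lemma chi_finset_sum {q : ℤ} (hq : 1 ≤ q) {ι : Type*} (s : Finset ι) (g : ι → ℤ) :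
    chi q (∑ i ∈ s, g i) = ∏ i ∈ s, chi q (g i) := by
  induction s using Finset.cons_induction with
  | empty => simp [chi_zero]
  | cons i s hi ih => rw [Finset.sum_cons, Finset.prod_cons, chi_add hq, ih]

end GaussAux


open GaussAux in
/-- the Gauss sum bound `|S_Q(a,b;q)| ≤ (det A)^{k/2} q^{k/2}`. -/
theorem gauss_sum_bound
    (k : ℕ) (hk : 1 ≤ k)
    (A : Matrix (Fin k) (Fin k) ℤ)
    (hAsymm : A.IsSymm)
    (hApos : (A.map ((↑) : ℤ → ℝ)).PosDef)
    (hAeven : ∀ i, 2 ∣ A i i)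
    (Q : (Fin k → ℤ) → ℤ)
    (hQ : ∀ x, 2 * Q x = x ⬝ᵥ A.mulVec x)
    (q : ℤ) (hq : 1 ≤ q) (a : ℤ) (ha : Int.gcd a q = 1) (b : Fin k → ℤ) :
    ‖∑ r ∈ Fintype.piFinset (fun _ : Fin k => Finset.Icc (1 : ℤ) q),
        Complex.exp ((-2 : ℂ) * Real.pi * Complex.I *
          ((Q r * a + r ⬝ᵥ b : ℤ) : ℂ) / (q : ℂ))‖
      ≤ (A.det : ℝ) ^ ((k : ℝ) / 2) * (q : ℝ) ^ ((k : ℝ) / 2) := by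
  classical
  set n := q.toNat with hn
  haveI : NeZero n := ⟨by omega⟩
  have hnq : ((n : ℕ) : ℤ) = q := Int.toNat_of_nonneg (by omega)
  set f : (Fin k → ℤ) → ℤ := fun r => Q r * a + r ⬝ᵥ b with hf
  set L : (Fin k → ZMod n) → (Fin k → ℤ) := fun v i => ((v i).val : ℤ) with hL
  have valcast : ∀ x : ZMod n, ((((x.val : ℕ) : ℤ)) : ZMod n) = x := by
    intro x
    push_cast
    simp [ZMod.natCast_val, ZMod.cast_id]
  have hdvd_iff : ∀ z : ℤ, ((z : ZMod n) = 0) ↔ q ∣ z := by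
    intro z
    rw [ZMod.intCast_zmod_eq_zero_iff_dvd, hnq]
  -- Step A: rewrite sum over the box as a sum over (ZMod n)^k
  have hS : (∑ r ∈ Fintype.piFinset (fun _ : Fin k => Finset.Icc (1 : ℤ) q),
        Complex.exp ((-2 : ℂ) * Real.pi * Complex.I *
          ((Q r * a + r ⬝ᵥ b : ℤ) : ℂ) / (q : ℂ)))
      = ∑ v : (Fin k → ZMod n), chi q (f (L v)) := by
    apply Finset.sum_bij (fun (r : Fin k → ℤ) _ => fun j => ((r j : ℤ) : ZMod n))
    · intro r _
      exact Finset.mem_univ _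
    · intro r hr s hs h
      have hr' := fun j => Finset.mem_Icc.mp (Fintype.mem_piFinset.mp hr j)
      have hs' := fun j => Finset.mem_Icc.mp (Fintype.mem_piFinset.mp hs j)
      funext j
      have hj : ((r j - s j : ℤ) : ZMod n) = 0 := by
        push_cast
        rw [congrFun h j]
        ring
      have hdvd := (hdvd_iff _).mp hj
      have : r j - s j = 0 := by
        refine Int.eq_zero_of_abs_lt_dvd hdvd ?_
        rw [abs_lt]
        constructor <;> [linarith [(hr' j).1, (hs' j).2]; linarith [(hr' j).2, (hs' j).1]]
      omega
    · intro v _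
      refine ⟨fun j => if v j = 0 then q else (((v j).val : ℕ) : ℤ), ?_, ?_⟩
      · apply Fintype.mem_piFinset.mpr
        intro j
        rw [Finset.mem_Icc]
        split_ifs with h
        · exact ⟨hq, le_refl q⟩
        · have h1 : (v j).val ≠ 0 := fun hc => h ((ZMod.val_eq_zero _).mp hc)
          have h2 : (v j).val < n := ZMod.val_lt _
          have h3 : (((v j).val : ℕ) : ℤ) < q := by
            rw [← hnq]; exact_mod_cast h2
          constructor
          · exact_mod_cast Nat.one_le_iff_ne_zero.mpr h1
          · omega
      · funext j
        beta_reduce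
        rw [apply_ite (fun z : ℤ => (z : ZMod n))]
        split_ifs with h
        · rw [← hnq]
          push_cast
          simp [ZMod.natCast_self, h]
        · exact valcast _
    · intro r hr
      show Complex.exp _ = chi q (f (L _))
      rw [show Complex.exp ((-2 : ℂ) * Real.pi * Complex.I *
          ((Q r * a + r ⬝ᵥ b : ℤ) : ℂ) / (q : ℂ)) = chi q (f r) from rfl]
      apply chi_congr hq
      apply f_congr A hAsymm Q hQ
      intro j
      show q ∣ r j - (((((r j : ℤ) : ZMod n)).val : ℕ) : ℤ)
      rw [ZMod.val_intCast, hnq]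
      exact ⟨r j / q, by linarith [Int.mul_ediv_add_emod (r j) q]⟩
  rw [hS]
  set S := ∑ v : (Fin k → ZMod n), chi q (f (L v)) with hSdef
  -- key pointwise identity
  have key : ∀ w u : Fin k → ZMod n,
      chi q (f (L (w + u))) * (starRingEnd ℂ) (chi q (f (L w)))
      = chi q (f (L u)) * chi q (a * (L w ⬝ᵥ A.mulVec (L u))) := by
    intro w u
    rw [chi_conj, ← chi_add hq, ← chi_add hq]
    apply chi_congr hq
    have hcong : ∀ i, q ∣ (L (w + u)) i - (L w + L u) i := by
      intro i
      rw [← hdvd_iff]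
      simp only [hL, Pi.add_apply]
      push_cast
      simp [ZMod.natCast_val, ZMod.cast_id]
    have hmain := f_congr A hAsymm Q hQ q a b (L (w + u)) (L w + L u) hcong
    have hexp : f (L w + L u) = f (L w) + f (L u) + a * (L w ⬝ᵥ A.mulVec (L u)) := by
      simp only [hf]
      rw [quad_add A hAsymm Q hQ, add_dotProduct]
      ring
    obtain ⟨m, hm⟩ := hmain
    have heq : f (L (w + u)) - f (L w + L u) = q * m := by
      simp only [hf]
      linarith [hm]
    exact ⟨m, by linarith [hexp, heq]⟩
  -- the inner character sum
  have hinner : ∀ u : Fin k → ZMod n,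
      (∑ w : Fin k → ZMod n, chi q (a * (L w ⬝ᵥ A.mulVec (L u))))
      = if (∀ j, q ∣ A.mulVec (L u) j) then ((q : ℂ))^k else 0 := by
    intro u
    set c := A.mulVec (L u) with hc
    have hrw : ∀ w : Fin k → ZMod n,
        chi q (a * (L w ⬝ᵥ c)) = ∏ j, chi q ((a * c j) * (((w j).val : ℕ) : ℤ)) := by
      intro w
      rw [← chi_finset_sum hq]
      congr 1
      simp only [hL, dotProduct]
      rw [Finset.mul_sum]
      exact Finset.sum_congr rfl fun j _ => by ring
    rw [Finset.sum_congr rfl fun w _ => hrw w]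
    have hps := Finset.prod_univ_sum (fun _ : Fin k => (Finset.univ : Finset (ZMod n)))
      (fun j x => chi q ((a * c j) * (((x.val : ℕ)) : ℤ)))
    rw [Fintype.piFinset_univ] at hps
    rw [← hps]
    rw [Finset.prod_congr rfl fun j _ => chi_sum_zmod hq (a * c j)]
    have hcop : IsCoprime (q : ℤ) a :=
      Int.isCoprime_iff_gcd_eq_one.mpr (by rw [Int.gcd_comm]; exact ha)
    have hiff : ∀ z : ℤ, (q ∣ a * z) ↔ q ∣ z := by
      intro z
      exact ⟨fun h => hcop.dvd_of_dvd_mul_left h, fun h => h.mul_left a⟩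
    by_cases hall : ∀ j, q ∣ c j
    · rw [if_pos hall]
      rw [Finset.prod_congr rfl fun j _ => if_pos ((hiff (c j)).mpr (hall j))]
      simp [Finset.prod_const, Finset.card_univ]
    · rw [if_neg hall]
      push_neg at hall
      obtain ⟨j, hj⟩ := hall
      exact Finset.prod_eq_zero (Finset.mem_univ j) (if_neg (fun hd => hj ((hiff (c j)).mp hd)))
  -- expansion of |S|^2
  have hT : S * (starRingEnd ℂ) S
      = ∑ u : Fin k → ZMod n, chi q (f (L u)) *
          (if (∀ j, q ∣ A.mulVec (L u) j) then ((q : ℂ))^k else 0) := by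
    rw [hSdef, map_sum, Finset.sum_mul_sum]
    rw [Finset.sum_comm]
    have hw : ∀ w : Fin k → ZMod n,
        (∑ v : Fin k → ZMod n, chi q (f (L v)) * (starRingEnd ℂ) (chi q (f (L w))))
        = ∑ u : Fin k → ZMod n, chi q (f (L u)) * chi q (a * (L w ⬝ᵥ A.mulVec (L u))) := by
      intro w
      rw [← Equiv.sum_comp (Equiv.addLeft w)
        (fun v => chi q (f (L v)) * (starRingEnd ℂ) (chi q (f (L w))))]
      exact Finset.sum_congr rfl fun u _ => key w u
    rw [Finset.sum_congr rfl fun w _ => hw w]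
    rw [Finset.sum_comm]
    refine Finset.sum_congr rfl fun u _ => ?_
    rw [← Finset.mul_sum, hinner u]
  -- counting
  set D := A.det.toNat with hDdef
  have hdetposR : (0 : ℝ) < ((A.det : ℤ) : ℝ) := by
    have h1 := hApos.det_pos
    have h2 : (A.map ((↑) : ℤ → ℝ)).det = ((A.det : ℤ) : ℝ) := by
      rw [show (A.map ((↑) : ℤ → ℝ)) = (Int.castRingHom ℝ).mapMatrix A from rfl,
        ← RingHom.map_det]
      rfl
    rw [← h2]
    exact h1
  have hdetpos : 0 < A.det := by exact_mod_cast hdetposR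
  have hDq : ((D : ℕ) : ℤ) = A.det := Int.toNat_of_nonneg (by omega)
  have hDpos : 0 < D := by omega
  set P : (Fin k → ZMod n) → Prop := fun u => ∀ j, q ∣ A.mulVec (L u) j with hP
  have hcard : (Finset.univ.filter P).card ≤ D ^ k := by
    set Z : Finset (ZMod n) := Finset.univ.filter (fun x : ZMod n => ((D : ℕ) : ZMod n) * x = 0)
      with hZ
    have hsub : Finset.univ.filter P ⊆ Fintype.piFinset (fun _ : Fin k => Z) := by
      intro u hu
      have hu' : P u := (Finset.mem_filter.mp hu).2
      apply Fintype.mem_piFinset.mpr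
      intro j
      rw [hZ, Finset.mem_filter]
      refine ⟨Finset.mem_univ _, ?_⟩
      -- q ∣ A.det * (L u) j
      have hadj : A.adjugate.mulVec (A.mulVec (L u)) = A.det • (L u) := by
        rw [Matrix.mulVec_mulVec, Matrix.adjugate_mul, Matrix.smul_mulVec,
          Matrix.one_mulVec]
      have hdj : q ∣ A.det * (L u j) := by
        have h1 : q ∣ A.adjugate.mulVec (A.mulVec (L u)) j :=
          dvd_dot' q _ _ hu'
        rw [hadj] at h1
        simpa [Pi.smul_apply, smul_eq_mul] using h1
      have hcast : ((A.det * (L u j) : ℤ) : ZMod n) = 0 := (hdvd_iff _).mpr hdj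
      rw [← hDq] at hcast
      simp only [hL] at hcast
      push_cast at hcast
      rw [ZMod.natCast_val, ZMod.cast_id] at hcast
      exact hcast
    calc (Finset.univ.filter P).card
        ≤ (Fintype.piFinset (fun _ : Fin k => Z)).card := Finset.card_le_card hsub
      _ = Z.card ^ k := by rw [Fintype.card_piFinset]; simp
      _ ≤ D ^ k := Nat.pow_le_pow_left (card_ker_le n D (by omega) hDpos) k
  -- norm bound for |S|^2
  have hnormsq : ‖S‖ ^ 2 ≤ ((D : ℝ)) ^ k * ((q : ℝ)) ^ k := by
    have h1 : ‖S‖ ^ 2 = ‖S * (starRingEnd ℂ) S‖ := by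
      rw [norm_mul, RCLike.norm_conj, pow_two]
    rw [h1, hT]
    calc ‖∑ u : Fin k → ZMod n, chi q (f (L u)) *
          (if (∀ j, q ∣ A.mulVec (L u) j) then ((q : ℂ))^k else 0)‖
        ≤ ∑ u : Fin k → ZMod n, ‖chi q (f (L u)) *
          (if (∀ j, q ∣ A.mulVec (L u) j) then ((q : ℂ))^k else 0)‖ := norm_sum_le _ _
      _ = ∑ u : Fin k → ZMod n, (if P u then ((q : ℝ))^k else 0) := by
          refine Finset.sum_congr rfl fun u _ => ?_
          rw [norm_mul, chi_norm, one_mul]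
          by_cases h : P u
          · rw [if_pos h, if_pos h, norm_pow]
            have hqc : ((q:ℂ)) = (((q:ℝ)):ℂ) := by push_cast; rfl
            have hn1 : ‖(q:ℂ)‖ = (q:ℝ) := by
              rw [hqc, Complex.norm_real, Real.norm_eq_abs,
                abs_of_nonneg (by exact_mod_cast (by omega : (0:ℤ) ≤ q))]
            rw [hn1]
          · rw [if_neg h, if_neg h, norm_zero]
      _ = (Finset.univ.filter P).card * ((q : ℝ))^k := by
          rw [← Finset.sum_filter, Finset.sum_const, nsmul_eq_mul]
      _ ≤ ((D : ℝ)) ^ k * ((q : ℝ)) ^ k := by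
          apply mul_le_mul_of_nonneg_right
          · exact_mod_cast hcard
          · positivity
  -- final rpow juggling
  have hq0R : (0:ℝ) ≤ (q:ℝ) := by positivity
  have hD0R : (0:ℝ) ≤ (D:ℝ) := by positivity
  have hDqR : ((D:ℕ):ℝ) = ((A.det : ℤ) : ℝ) := by exact_mod_cast congrArg (Int.cast : ℤ → ℝ) hDq
  have hstep : ‖S‖ ≤ Real.sqrt (((D:ℝ) * (q:ℝ)) ^ k) := by
    rw [Real.le_sqrt (norm_nonneg S) (by positivity)]
    calc ‖S‖ ^ 2 ≤ ((D : ℝ)) ^ k * ((q : ℝ)) ^ k := hnormsq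
      _ = ((D:ℝ) * (q:ℝ)) ^ k := (mul_pow _ _ _).symm
  have hsqrt : Real.sqrt (((D:ℝ) * (q:ℝ)) ^ k)
      = ((A.det : ℤ) : ℝ) ^ ((k : ℝ) / 2) * (q : ℝ) ^ ((k : ℝ) / 2) := by
    rw [Real.sqrt_eq_rpow, ← Real.rpow_natCast ((D:ℝ) * (q:ℝ)) k,
      ← Real.rpow_mul (by positivity)]
    rw [Real.mul_rpow hD0R hq0R, hDqR]
    rw [show ((k:ℝ) * (1 / 2)) = (k:ℝ) / 2 by ring]
  calc ‖S‖ ≤ Real.sqrt (((D:ℝ) * (q:ℝ)) ^ k) := hstep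
    _ = _ := hsqrt
end
end

section
/- Let k ≥ 1 and let Q be a positive definite integral quadratic form in k variables with adjoint form Q*. For every c0 > 0 there exists a constant A, depending only on Q, k and c0, such that the following holds. Let y > 0, let α ∈ ℝ, let q ≥ 1 be an integer, and let β ∈ ℝ^k, and suppose q ≤ c0 y^{−1/2}, q|α| ≤ c0 y^{1/2}, and |β_i| ≤ 3/(4q) for each i. Then | ∑_{m ∈ ℤ^k, m ≠ 0} e^{−2π Q*(m/q + β)/(y + iα)} | ≤ A y^{−k/4} q^{k/2} (y² + α²)^{k/4}. -/
open Matrix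

noncomputable section

/-- Lower bound for a positive definite quadratic form: `lam * (x ⬝ᵥ x) ≤ x ⬝ᵥ M x`. -/
lemma posdef_lower {k : ℕ} (hk : 1 ≤ k) (M : Matrix (Fin k) (Fin k) ℝ) (hM : M.PosDef) :
    ∃ lam : ℝ, 0 < lam ∧ ∀ x : Fin k → ℝ, lam * (x ⬝ᵥ x) ≤ x ⬝ᵥ M.mulVec x := by
  classical
  set f : (Fin k → ℝ) → ℝ := fun x => x ⬝ᵥ M.mulVec x with hf
  have hfc : Continuous f := by
    simp only [hf, dotProduct, Matrix.mulVec]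
    fun_prop
  have hf0c : Continuous fun x : Fin k → ℝ => x ⬝ᵥ x := by
    simp only [dotProduct]
    fun_prop
  set S : Set (Fin k → ℝ) := {x | x ⬝ᵥ x = 1} with hS
  have hSclosed : IsClosed S := isClosed_eq hf0c continuous_const
  have hSsub : S ⊆ Metric.closedBall 0 1 := by
    intro x hx
    simp only [Metric.mem_closedBall, dist_zero_right]
    rw [pi_norm_le_iff_of_nonneg zero_le_one]
    intro i
    rw [Real.norm_eq_abs, abs_le]
    have h1 : x i * x i ≤ 1 := by
      rw [← hx]
      exact Finset.single_le_sum (f := fun j => x j * x j)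
        (fun j _ => mul_self_nonneg _) (Finset.mem_univ i)
    constructor <;> nlinarith
  have hScompact : IsCompact S :=
    (isCompact_closedBall 0 1).of_isClosed_subset hSclosed hSsub
  have hSne : S.Nonempty := by
    refine ⟨Pi.single (⟨0, hk⟩ : Fin k) 1, ?_⟩
    simp [hS, dotProduct, Pi.single_apply]
  obtain ⟨x₀, hx₀S, hmin⟩ := hScompact.exists_isMinOn hSne hfc.continuousOn
  have hx₀ne : x₀ ≠ 0 := by
    intro h
    rw [hS] at hx₀S
    simp only [Set.mem_setOf_eq, h, zero_dotProduct] at hx₀S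
    norm_num at hx₀S
  have hlam : 0 < f x₀ := by
    have := hM.dotProduct_mulVec_pos hx₀ne
    simpa [hf] using this
  refine ⟨f x₀, hlam, fun x => ?_⟩
  by_cases hx : x = 0
  · simp [hx, hf]
  · have hxx : 0 < x ⬝ᵥ x := by
      rcases (dotProduct_self_eq_zero (v := x)).not.mpr hx with h
      have h0 : 0 ≤ x ⬝ᵥ x := Finset.sum_nonneg fun i _ => mul_self_nonneg _
      exact lt_of_le_of_ne h0 (Ne.symm h)
    set r : ℝ := Real.sqrt (x ⬝ᵥ x) with hr
    have hrpos : 0 < r := Real.sqrt_pos.mpr hxx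
    have hr2 : r * r = x ⬝ᵥ x := Real.mul_self_sqrt hxx.le
    set z : Fin k → ℝ := r⁻¹ • x with hz
    have hzS : z ∈ S := by
      simp only [hS, Set.mem_setOf_eq, hz, smul_dotProduct, dotProduct_smul,
        smul_eq_mul]
      field_simp
      nlinarith [hr2]
    have hfz : f z = r⁻¹ * r⁻¹ * f x := by
      simp only [hf, hz, smul_dotProduct, dotProduct_smul, Matrix.mulVec_smul,
        smul_eq_mul]
      ring
    have h3 : f x₀ ≤ f z := hmin hzS
    rw [hfz] at h3
    have hfin : f x₀ * (r * r) ≤ f x := by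
      have h2 : f x₀ * (r * r) ≤ (r⁻¹ * r⁻¹ * f x) * (r * r) :=
        mul_le_mul_of_nonneg_right h3 (by positivity)
      calc f x₀ * (r * r) ≤ (r⁻¹ * r⁻¹ * f x) * (r * r) := h2
        _ = f x := by field_simp
    rw [hr2] at hfin
    exact hfin

/-- 1-d Gaussian summability over ℤ. -/
lemma summable_gauss_int {c : ℝ} (hc : 0 < c) :
    Summable fun n : ℤ => Real.exp (-c * (n : ℝ) ^ 2) := by
  have key : ∀ g : ℕ → ℤ, (∀ n : ℕ, (n : ℝ) ≤ |(g n : ℝ)|) →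
      Summable fun n : ℕ => Real.exp (-c * (g n : ℝ) ^ 2) := by
    intro g hg
    have : Summable fun n : ℕ => Real.exp (-c) ^ n :=
      summable_geometric_of_lt_one (Real.exp_nonneg _) (Real.exp_lt_one_iff.mpr (by linarith))
    refine this.of_nonneg_of_le (fun n => (Real.exp_pos _).le) fun n => ?_
    rw [← Real.exp_nat_mul]
    apply Real.exp_le_exp.mpr
    have h1 : (n : ℝ) ≤ |(g n : ℝ)| := hg n
    have h2 : (n : ℝ) ^ 2 ≤ (g n : ℝ) ^ 2 := by
      rw [← sq_abs ((g n : ℝ))]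
      exact pow_le_pow_left₀ (Nat.cast_nonneg n) h1 2
    have h3 : (n : ℝ) ≤ (n : ℝ) ^ 2 := by
      have h4 : n ≤ n ^ 2 := Nat.le_self_pow two_ne_zero n
      exact_mod_cast h4
    nlinarith
  refine Summable.of_nat_of_neg_add_one (key (fun n => (n : ℤ)) ?_) (key (fun n => -((n:ℤ)+1)) ?_)
  · intro n; simp
  · intro n
    push_cast
    rw [abs_neg]
    have : (0:ℝ) ≤ (n:ℝ) + 1 := by positivity
    rw [abs_of_nonneg this]
    linarith

/-- Summability of products over pi types. -/
lemma summable_pi_prod {g : ℤ → ℝ} (hg : Summable g) (hg0 : ∀ n, 0 ≤ g n) :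
    ∀ n : ℕ, Summable (fun m : Fin n → ℤ => ∏ i, g (m i)) := by
  intro n
  induction n with
  | zero =>
    haveI : Unique (Fin 0 → ℤ) := ⟨⟨fun i => i.elim0⟩, fun f => funext fun i => i.elim0⟩
    exact Summable.of_finite
  | succ n ih =>
    have hg0' : 0 ≤ g := fun n => hg0 n
    have hprodnn : 0 ≤ fun m : Fin n → ℤ => ∏ i, g (m i) :=
      fun m => Finset.prod_nonneg fun i _ => hg0 _
    have hprod : Summable (fun p : ℤ × (Fin n → ℤ) => g p.1 * ∏ i, g (p.2 i)) :=
      Summable.mul_of_nonneg (f := g) (g := fun m : Fin n → ℤ => ∏ i, g (m i)) hg ih hg0' hprodnn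
    have e : (Fin (n+1) → ℤ) → ℤ × (Fin n → ℤ) := fun m => (m 0, fun i => m i.succ)
    have hinj : Function.Injective (fun m : Fin (n+1) → ℤ => ((m 0, fun i => m i.succ) : ℤ × (Fin n → ℤ))) := by
      intro m₁ m₂ h
      funext i
      refine Fin.cases ?_ ?_ i
      · exact congrArg Prod.fst h
      · intro j
        exact congrFun (congrArg Prod.snd h) j
    have := hprod.comp_injective hinj
    refine this.congr fun m => ?_
    simp only [Function.comp_apply]
    rw [Fin.prod_univ_succ]

lemma summable_gauss_pi {c : ℝ} (hc : 0 < c) (k : ℕ) :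
    Summable fun m : Fin k → ℤ => Real.exp (-c * ∑ i, (m i : ℝ) ^ 2) := by
  have := summable_pi_prod (summable_gauss_int hc) (fun n => (Real.exp_pos _).le) k
  refine this.congr fun m => ?_
  rw [← Real.exp_sum, Finset.mul_sum]


set_option maxHeartbeats 1000000 in
/-- the bound on the nonzero frequencies of the inverted theta series:
`|∑_{m ≠ 0} e^{-2π Q*(m/q+β)/(y+iα)}| ≤ A y^{-k/4} q^{k/2} (y²+α²)^{k/4}`. -/
theorem theta_tail_bound
    (k : ℕ) (hk : 1 ≤ k)
    (A : Matrix (Fin k) (Fin k) ℤ)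
    (hAsymm : A.IsSymm)
    (hApos : (A.map ((↑) : ℤ → ℝ)).PosDef)
    (hAeven : ∀ i, 2 ∣ A i i)
    (Q : (Fin k → ℤ) → ℤ)
    (hQ : ∀ x, 2 * Q x = x ⬝ᵥ A.mulVec x)
    (Qstar : (Fin k → ℝ) → ℝ)
    (hQstar : ∀ x, Qstar x = (1 / 2) * (x ⬝ᵥ ((A.map ((↑) : ℤ → ℝ))⁻¹).mulVec x))
    (c₀ : ℝ) (hc₀ : 0 < c₀) :
    ∃ C : ℝ, ∀ (y : ℝ), 0 < y → ∀ (α : ℝ) (q : ℤ), 1 ≤ q → ∀ (β : Fin k → ℝ),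
      (q : ℝ) ≤ c₀ * y ^ (-(1 : ℝ) / 2) →
      (q : ℝ) * |α| ≤ c₀ * y ^ ((1 : ℝ) / 2) →
      (∀ i, |β i| ≤ 3 / (4 * (q : ℝ))) →
      ‖∑' m : Fin k → ℤ,
          if m = 0 then 0
          else Complex.exp ((-2 : ℂ) * Real.pi *
            ((Qstar (fun i => (m i : ℝ) / (q : ℝ) + β i) : ℝ) : ℂ) /
            ((y : ℂ) + Complex.I * (α : ℝ)))‖
        ≤ C * y ^ (-(k : ℝ) / 4) * (q : ℝ) ^ ((k : ℝ) / 2) *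
            (y ^ 2 + α ^ 2) ^ ((k : ℝ) / 4) := by
  classical
  obtain ⟨lam, hlam, hlow⟩ := posdef_lower hk _ hApos.inv
  set a : ℝ := (k : ℝ) / 4 with ha_def
  have ha : 0 < a := by
    have : (1 : ℝ) ≤ (k : ℝ) := by exact_mod_cast hk
    rw [ha_def]; linarith
  set c₁ : ℝ := Real.pi * lam / 16 with hc₁_def
  have hc₁ : 0 < c₁ := by rw [hc₁_def]; positivity
  set c₂ : ℝ := c₁ / (4 * c₀ ^ 2) with hc₂_def
  have hc₂ : 0 < c₂ := by rw [hc₂_def]; positivity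
  set w : (Fin k → ℤ) → ℝ := fun m => if m = 0 then 0 else Real.exp (-c₂ * ∑ i, (m i : ℝ) ^ 2)
    with hw_def
  have hw0 : ∀ m, 0 ≤ w m := by
    intro m; rw [hw_def]; dsimp only
    split
    · exact le_refl 0
    · exact (Real.exp_pos _).le
  have hw : Summable w := by
    refine (summable_gauss_pi hc₂ k).of_nonneg_of_le hw0 fun m => ?_
    rw [hw_def]; dsimp only
    split
    · exact (Real.exp_pos _).le
    · exact le_refl _
  set S : ℝ := ∑' m, w m with hS_def
  have hS0 : 0 ≤ S := tsum_nonneg hw0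
  set B : ℝ := Real.exp (a * Real.log (4 * a / c₁)) with hB_def
  have hB0 : 0 < B := Real.exp_pos _
  refine ⟨S * B, ?_⟩
  intro y hy α q hq1 β hqy hqα hβ
  have hqR : (0 : ℝ) < (q : ℝ) := by exact_mod_cast lt_of_lt_of_le zero_lt_one hq1
  have hD : (0 : ℝ) < y ^ 2 + α ^ 2 := by positivity
  set u : ℝ := y / ((q : ℝ) ^ 2 * (y ^ 2 + α ^ 2)) with hu_def
  have hu : 0 < u := by rw [hu_def]; positivity
  -- squared hypotheses
  have hq2y : (q : ℝ) ^ 2 * y ≤ c₀ ^ 2 := by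
    have h1 : (q : ℝ) ^ 2 ≤ (c₀ * y ^ (-(1 : ℝ) / 2)) ^ 2 := pow_le_pow_left₀ hqR.le hqy 2
    have h2 : (y ^ (-(1 : ℝ) / 2)) ^ (2 : ℕ) = y⁻¹ := by
      rw [← Real.rpow_natCast (y ^ (-(1 : ℝ) / 2)) 2, ← Real.rpow_mul hy.le]
      norm_num [Real.rpow_neg_one]
    rw [mul_pow, h2] at h1
    have h3 : (q : ℝ) ^ 2 * y ≤ c₀ ^ 2 * y⁻¹ * y := mul_le_mul_of_nonneg_right h1 hy.le
    calc (q : ℝ) ^ 2 * y ≤ c₀ ^ 2 * y⁻¹ * y := h3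
      _ = c₀ ^ 2 := by field_simp
  have hq2α : (q : ℝ) ^ 2 * α ^ 2 ≤ c₀ ^ 2 * y := by
    have h0 : 0 ≤ (q : ℝ) * |α| := by positivity
    have h1 : ((q : ℝ) * |α|) ^ 2 ≤ (c₀ * y ^ ((1 : ℝ) / 2)) ^ 2 := pow_le_pow_left₀ h0 hqα 2
    have h2 : (y ^ ((1 : ℝ) / 2)) ^ (2 : ℕ) = y := by
      rw [← Real.rpow_natCast (y ^ ((1 : ℝ) / 2)) 2, ← Real.rpow_mul hy.le]
      norm_num
    rw [mul_pow, mul_pow, sq_abs, h2] at h1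
    exact h1
  have hu0 : 1 / (2 * c₀ ^ 2) ≤ u := by
    have hDq : (0 : ℝ) < (q : ℝ) ^ 2 * (y ^ 2 + α ^ 2) := by positivity
    rw [hu_def, div_le_div_iff₀ (by positivity) hDq]
    have h1 : (q : ℝ) ^ 2 * y * y ≤ c₀ ^ 2 * y := mul_le_mul_of_nonneg_right hq2y hy.le
    nlinarith
  -- the summand
  set F : (Fin k → ℤ) → ℂ := fun m =>
    if m = 0 then 0
    else Complex.exp ((-2 : ℂ) * Real.pi *
      ((Qstar (fun i => (m i : ℝ) / (q : ℝ) + β i) : ℝ) : ℂ) /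
      ((y : ℂ) + Complex.I * (α : ℝ))) with hF_def
  have key : ∀ m : Fin k → ℤ, ‖F m‖ ≤ Real.exp (-(c₁ * u) / 2) * w m := by
    intro m
    by_cases hm : m = 0
    · rw [hF_def, hw_def]; dsimp only; rw [if_pos hm, if_pos hm, mul_zero, norm_zero]
    set x : Fin k → ℝ := fun i => (m i : ℝ) / (q : ℝ) + β i with hx_def
    set Sm : ℝ := ∑ i, (m i : ℝ) ^ 2 with hSm_def
    have hSm0 : 0 ≤ Sm := Finset.sum_nonneg fun i _ => sq_nonneg _
    have hSm1 : 1 ≤ Sm := by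
      obtain ⟨i, hi⟩ := Function.ne_iff.mp hm
      have h1 : (1 : ℝ) ≤ (m i : ℝ) ^ 2 := by
        have h2 : (1 : ℤ) ≤ |m i| := Int.one_le_abs hi
        have h3 : (1 : ℝ) ≤ |(m i : ℝ)| := by exact_mod_cast h2
        nlinarith [sq_abs ((m i : ℝ))]
      rw [hSm_def]
      exact le_trans h1 (Finset.single_le_sum (f := fun i => ((m i : ℝ)) ^ 2)
        (fun i _ => sq_nonneg _) (Finset.mem_univ i))
    have hxlow : ∀ i, (m i : ℝ) ^ 2 / (16 * (q : ℝ) ^ 2) ≤ x i ^ 2 := by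
      intro i
      by_cases hmi : m i = 0
      · rw [hmi]; simpa using sq_nonneg (x i)
      · have h3 : (1 : ℝ) ≤ |(m i : ℝ)| := by
          exact_mod_cast Int.one_le_abs hmi
        have h1 : |(m i : ℝ) / (q : ℝ)| ≤ |x i| + |β i| := by
          have h2 : (m i : ℝ) / (q : ℝ) = x i + (-β i) := by rw [hx_def]; ring
          rw [h2]
          exact (abs_add_le _ _).trans (by rw [abs_neg])
        rw [abs_div, abs_of_pos hqR] at h1
        have h4 : |β i| ≤ 3 / 4 * |(m i : ℝ)| / (q : ℝ) := by
          calc |β i| ≤ 3 / (4 * (q : ℝ)) := hβ i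
            _ = 3 / 4 * 1 / (q : ℝ) := by ring
            _ ≤ 3 / 4 * |(m i : ℝ)| / (q : ℝ) := by gcongr
        have h5 : |(m i : ℝ)| / (4 * (q : ℝ)) ≤ |x i| := by
          have : |(m i : ℝ)| / (q : ℝ) - 3 / 4 * |(m i : ℝ)| / (q : ℝ) = |(m i : ℝ)| / (4 * (q : ℝ)) := by
            field_simp; ring
          linarith
        have h6 : (|(m i : ℝ)| / (4 * (q : ℝ))) ^ 2 ≤ |x i| ^ 2 :=
          pow_le_pow_left₀ (by positivity) h5 2
        rw [sq_abs] at h6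
        calc (m i : ℝ) ^ 2 / (16 * (q : ℝ) ^ 2) = (|(m i : ℝ)| / (4 * (q : ℝ))) ^ 2 := by
              rw [div_pow, sq_abs]; ring_nf
          _ ≤ x i ^ 2 := h6
    have hQlow : lam / 2 * (Sm / (16 * (q : ℝ) ^ 2)) ≤ Qstar x := by
      rw [hQstar x]
      have h1 : Sm / (16 * (q : ℝ) ^ 2) ≤ x ⬝ᵥ x := by
        have h2 : ∑ i, (m i : ℝ) ^ 2 / (16 * (q : ℝ) ^ 2) ≤ ∑ i, x i ^ 2 :=
          Finset.sum_le_sum fun i _ => hxlow i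
        rw [← Finset.sum_div] at h2
        calc Sm / (16 * (q : ℝ) ^ 2) ≤ ∑ i, x i ^ 2 := h2
          _ = x ⬝ᵥ x := by simp [dotProduct, sq]
      have h3 : lam * (Sm / (16 * (q : ℝ) ^ 2)) ≤ lam * (x ⬝ᵥ x) :=
        mul_le_mul_of_nonneg_left h1 hlam.le
      have h4 := hlow x
      calc lam / 2 * (Sm / (16 * (q : ℝ) ^ 2)) = 1 / 2 * (lam * (Sm / (16 * (q : ℝ) ^ 2))) := by ring
        _ ≤ 1 / 2 * (lam * (x ⬝ᵥ x)) := by linarith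
        _ ≤ 1 / 2 * (x ⬝ᵥ ((A.map ((↑) : ℤ → ℝ))⁻¹).mulVec x) := by linarith
    have hnorm : ‖F m‖ = Real.exp (-2 * Real.pi * Qstar x * (y / (y ^ 2 + α ^ 2))) := by
      rw [hF_def]; dsimp only; rw [if_neg hm]
      rw [Complex.norm_exp]
      congr 1
      have hz : (-2 : ℂ) * Real.pi * ((Qstar x : ℝ) : ℂ) = ((-2 * Real.pi * Qstar x : ℝ) : ℂ) := by
        push_cast; ring
      rw [div_eq_mul_inv, hz, Complex.re_ofReal_mul, Complex.inv_re]
      simp only [Complex.normSq_apply, Complex.add_re, Complex.add_im, Complex.ofReal_re,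
        Complex.ofReal_im, Complex.mul_re, Complex.mul_im, Complex.I_re, Complex.I_im]
      ring
    rw [hnorm]
    have hwm : w m = Real.exp (-c₂ * Sm) := by rw [hw_def]; dsimp only; rw [if_neg hm]
    rw [hwm, ← Real.exp_add]
    apply Real.exp_le_exp.mpr
    -- -2π Q* x * t ≤ -(c₁ u)/2 - c₂ Sm
    have ht : (0 : ℝ) < y / (y ^ 2 + α ^ 2) := by positivity
    have h5 : 2 * Real.pi * (lam / 2 * (Sm / (16 * (q : ℝ) ^ 2))) * (y / (y ^ 2 + α ^ 2))
        ≤ 2 * Real.pi * Qstar x * (y / (y ^ 2 + α ^ 2)) := by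
      apply mul_le_mul_of_nonneg_right _ ht.le
      apply mul_le_mul_of_nonneg_left hQlow (by positivity)
    have h6 : c₁ * u * Sm = 2 * Real.pi * (lam / 2 * (Sm / (16 * (q : ℝ) ^ 2)))
        * (y / (y ^ 2 + α ^ 2)) := by
      rw [hc₁_def, hu_def]
      field_simp
    have h8 : c₂ ≤ c₁ * u / 2 := by
      have h9 : c₁ * (1 / (2 * c₀ ^ 2)) ≤ c₁ * u := mul_le_mul_of_nonneg_left hu0 hc₁.le
      rw [hc₂_def]
      calc c₁ / (4 * c₀ ^ 2) = c₁ * (1 / (2 * c₀ ^ 2)) / 2 := by ring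
        _ ≤ c₁ * u / 2 := by linarith
    have h10 : c₁ * u / 2 + c₂ * Sm ≤ c₁ * u * Sm := by
      have h11 : c₂ * Sm ≤ c₁ * u / 2 * Sm := mul_le_mul_of_nonneg_right h8 hSm0
      have h12 : c₁ * u / 2 ≤ c₁ * u / 2 * Sm :=
        le_mul_of_one_le_right (by positivity) hSm1
      nlinarith
    nlinarith [h5, h6, h10]
  -- summability of norms
  have hsum2 : Summable fun m => Real.exp (-(c₁ * u) / 2) * w m := hw.mul_left _
  have hnormsum : Summable fun m => ‖F m‖ :=
    hsum2.of_nonneg_of_le (fun m => norm_nonneg _) key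
  -- the exp/rpow bound
  have hexpB : Real.exp (-(c₁ * u) / 2) ≤ B * u ^ (-a) := by
    have h10 : Real.log u = Real.log (c₁ * u / (4 * a)) + Real.log (4 * a / c₁) := by
      rw [← Real.log_mul (by positivity) (by positivity)]
      congr 1
      field_simp
    have h11 : Real.log (c₁ * u / (4 * a)) ≤ c₁ * u / (4 * a) := Real.log_le_self (by positivity)
    have hlogu : a * Real.log u ≤ c₁ * u / 4 + a * Real.log (4 * a / c₁) := by
      have h12 : a * Real.log (c₁ * u / (4 * a)) ≤ a * (c₁ * u / (4 * a)) :=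
        mul_le_mul_of_nonneg_left h11 ha.le
      have h13 : a * (c₁ * u / (4 * a)) = c₁ * u / 4 := by field_simp
      calc a * Real.log u = a * Real.log (c₁ * u / (4 * a)) + a * Real.log (4 * a / c₁) := by
            rw [h10]; ring
        _ ≤ c₁ * u / 4 + a * Real.log (4 * a / c₁) := by linarith
    rw [hB_def, Real.rpow_def_of_pos hu, ← Real.exp_add]
    apply Real.exp_le_exp.mpr
    have hcu : 0 < c₁ * u := mul_pos hc₁ hu
    linarith
  -- rpow algebra
  have hupow : u ^ (-a) = y ^ (-(k : ℝ) / 4) * (q : ℝ) ^ ((k : ℝ) / 2) *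
      (y ^ 2 + α ^ 2) ^ ((k : ℝ) / 4) := by
    have hDq : (0 : ℝ) < (q : ℝ) ^ 2 * (y ^ 2 + α ^ 2) := by positivity
    have e0 : u ^ (-a) = y ^ (-a) * ((q : ℝ) ^ 2 * (y ^ 2 + α ^ 2)) ^ a := by
      rw [hu_def, Real.div_rpow hy.le hDq.le, Real.rpow_neg hy.le, Real.rpow_neg hDq.le,
        div_eq_mul_inv, inv_inv]
    have e1 : ((q : ℝ) ^ 2 * (y ^ 2 + α ^ 2)) ^ a = ((q : ℝ) ^ 2) ^ a * (y ^ 2 + α ^ 2) ^ a :=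
      Real.mul_rpow (by positivity) hD.le
    have e2 : ((q : ℝ) ^ 2) ^ a = (q : ℝ) ^ ((k : ℝ) / 2) := by
      rw [← Real.rpow_natCast (q : ℝ) 2, ← Real.rpow_mul hqR.le]
      congr 1
      rw [ha_def]
      push_cast
      ring
    have e3 : y ^ (-a) = y ^ (-(k : ℝ) / 4) := by
      congr 1
      rw [ha_def]
      ring
    rw [e0, e1, e2, e3]
    ring
  -- final chain
  calc ‖∑' m, F m‖ ≤ ∑' m, ‖F m‖ := norm_tsum_le_tsum_norm hnormsum
    _ ≤ ∑' m, Real.exp (-(c₁ * u) / 2) * w m := Summable.tsum_le_tsum key hnormsum hsum2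
    _ = Real.exp (-(c₁ * u) / 2) * S := by rw [hS_def]; exact tsum_mul_left
    _ ≤ B * u ^ (-a) * S := mul_le_mul_of_nonneg_right hexpB hS0
    _ = S * B * u ^ (-a) := by ring
    _ = S * B * y ^ (-(k : ℝ) / 4) * (q : ℝ) ^ ((k : ℝ) / 2) *
        (y ^ 2 + α ^ 2) ^ ((k : ℝ) / 4) := by rw [hupow]; ring
end
end

section
/- Let k ≥ 1. There exists a constant A, depending only on k, such that for every λ ∈ ℂ with Re λ = 1, every real α ≠ 0, every real B ≥ 0, every integer r ≥ 1, and every integer j satisfying 2^{−j−1} < 2^{−r} |α| ≤ 2^{−j}, one has | ∫_{2^{−j}}^{2^{−j+1}} y^{kλ/2 − 1} e^{−B/(y + iα)} (y + iα)^{−k/2} dy | ≤ A 2^{−rk/2}. -/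
noncomputable section

/-- the oscillatory integral bound on the line `Re λ = 1` in the double
decomposition of the major arcs. -/
theorem oscillatory_integral_bound_line_one
    (k : ℕ) (hk : 1 ≤ k) :
    ∃ A : ℝ, ∀ (lam : ℂ), lam.re = 1 → ∀ (α : ℝ), α ≠ 0 → ∀ (B : ℝ), 0 ≤ B →
      ∀ (r : ℕ), 1 ≤ r → ∀ (j : ℤ),
        (2 : ℝ) ^ (-(j : ℝ) - 1) < (2 : ℝ) ^ (-(r : ℝ)) * |α| →
        (2 : ℝ) ^ (-(r : ℝ)) * |α| ≤ (2 : ℝ) ^ (-(j : ℝ)) →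
        ‖∫ y in ((2 : ℝ) ^ (-(j : ℝ)))..((2 : ℝ) ^ (-(j : ℝ) + 1)),
            (y : ℂ) ^ ((k : ℂ) * lam / 2 - 1) *
              Complex.exp (-(B : ℂ) / ((y : ℂ) + Complex.I * (α : ℝ))) /
              ((y : ℂ) + Complex.I * (α : ℝ)) ^ ((k : ℂ) / 2)‖
          ≤ A * (2 : ℝ) ^ (-(r : ℝ) * (k : ℝ) / 2) := by
  use (2 : ℝ) ^ (k : ℝ)
  intro lam hlam α hα B hB r hr j h1 h2
  set a : ℝ := (2 : ℝ) ^ (-(j : ℝ)) with ha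
  have ha0 : 0 < a := Real.rpow_pos_of_pos (by norm_num) _
  have hα0 : 0 < |α| := abs_pos.mpr hα
  set e : ℝ := (k : ℝ) / 2 with he
  have he0 : 0 < e := by positivity
  have hb : (2 : ℝ) ^ (-(j : ℝ) + 1) = 2 * a := by
    rw [ha, show (-(j:ℝ) + 1) = 1 + -(j:ℝ) by ring,
      Real.rpow_add (by norm_num : (0:ℝ) < 2), Real.rpow_one]
  set C : ℝ := (2 : ℝ) ^ e * a ^ (e - 1) / |α| ^ e with hC
  have key : ∀ y ∈ Set.uIoc a ((2 : ℝ) ^ (-(j : ℝ) + 1)),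
      ‖(y : ℂ) ^ ((k : ℂ) * lam / 2 - 1) *
          Complex.exp (-(B : ℂ) / ((y : ℂ) + Complex.I * (α : ℝ))) /
          ((y : ℂ) + Complex.I * (α : ℝ)) ^ ((k : ℂ) / 2)‖ ≤ C := by
    intro y hy
    have hab : a ≤ (2 : ℝ) ^ (-(j : ℝ) + 1) := by
      apply Real.rpow_le_rpow_of_exponent_le (by norm_num); linarith
    rw [Set.uIoc_of_le hab] at hy
    have hy0 : 0 < y := lt_trans ha0 hy.1
    have hyb : y ≤ 2 * a := by
      have h' := hy.2; rw [hb] at h'; exact h'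
    set z : ℂ := (y : ℂ) + Complex.I * (α : ℝ) with hz
    have hzim : z.im = α := by simp [hz]
    have hzabs : |α| ≤ ‖z‖ := by
      rw [← hzim]; exact Complex.abs_im_le_norm z
    have h1n : ‖(y : ℂ) ^ ((k : ℂ) * lam / 2 - 1)‖ = y ^ (e - 1) := by
      rw [Complex.norm_cpow_eq_rpow_re_of_pos hy0]
      congr 1
      simp [Complex.div_re, Complex.mul_re, hlam, he, Complex.normSq]
    have h2n : ‖Complex.exp (-(B : ℂ) / z)‖ ≤ 1 := by
      rw [Complex.norm_exp, Real.exp_le_one_iff]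
      have hzre : z.re = y := by simp [hz]
      have hnsq : (0:ℝ) ≤ Complex.normSq z := Complex.normSq_nonneg z
      have hre : (-(B : ℂ) / z).re = -B * y / Complex.normSq z := by
        rw [Complex.div_re, hzre]; simp
      rw [hre]
      apply div_nonpos_of_nonpos_of_nonneg _ hnsq
      nlinarith
    have h3n : ‖z ^ ((k : ℂ) / 2)‖ = ‖z‖ ^ e := by
      have : ((k : ℂ) / 2) = ((e : ℝ) : ℂ) := by rw [he]; push_cast; ring
      rw [this, Complex.norm_cpow_real]
    rw [norm_div, norm_mul, h1n, h3n]
    have hden : |α| ^ e ≤ ‖z‖ ^ e :=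
      Real.rpow_le_rpow hα0.le hzabs he0.le
    have hynum : y ^ (e - 1) ≤ (2 : ℝ) ^ e * a ^ (e - 1) := by
      rcases le_or_gt 1 e with hE | hE
      · calc y ^ (e - 1) ≤ (2 * a) ^ (e - 1) :=
              Real.rpow_le_rpow hy0.le hyb (by linarith)
          _ = 2 ^ (e - 1) * a ^ (e - 1) := Real.mul_rpow (by norm_num) ha0.le
          _ ≤ 2 ^ e * a ^ (e - 1) :=
              mul_le_mul_of_nonneg_right
                (Real.rpow_le_rpow_of_exponent_le (by norm_num) (by linarith))
                (Real.rpow_nonneg ha0.le _)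
      · calc y ^ (e - 1) ≤ a ^ (e - 1) :=
              Real.rpow_le_rpow_of_nonpos ha0 hy.1.le (by linarith)
          _ ≤ 2 ^ e * a ^ (e - 1) :=
              le_mul_of_one_le_left (Real.rpow_nonneg ha0.le _)
                (Real.one_le_rpow (by norm_num) he0.le)
    calc y ^ (e - 1) * ‖Complex.exp (-(B:ℂ)/z)‖ / ‖z‖ ^ e
        ≤ (2 : ℝ) ^ e * a ^ (e - 1) * 1 / |α| ^ e := by
          apply div_le_div₀ (by positivity)
            (mul_le_mul hynum h2n (norm_nonneg _) (by positivity)) (by positivity) hden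
      _ = C := by rw [hC]; ring
  have hlen : |(2:ℝ)^(-(j:ℝ)+1) - a| = a := by
    rw [hb, abs_of_nonneg (by linarith)]; ring
  have hmain := intervalIntegral.norm_integral_le_of_norm_le_const key
  rw [hlen] at hmain
  refine hmain.trans ?_
  have hae : a ≤ 2 * ((2:ℝ)^(-(r:ℝ)) * |α|) := by
    have h' : a = 2 * (2:ℝ)^(-(j:ℝ)-1) := by
      rw [ha, show (2:ℝ) * (2:ℝ)^(-(j:ℝ)-1) = (2:ℝ)^(1:ℝ) * (2:ℝ)^(-(j:ℝ)-1) by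
          rw [Real.rpow_one],
        ← Real.rpow_add (by norm_num : (0:ℝ) < 2)]
      congr 1; ring
    rw [h']; linarith
  have h3 : a ^ e ≤ 2 ^ e * ((2:ℝ)^(-(r:ℝ)))^e * |α| ^ e := by
    calc a ^ e ≤ (2 * ((2:ℝ)^(-(r:ℝ)) * |α|)) ^ e := Real.rpow_le_rpow ha0.le hae he0.le
      _ = 2 ^ e * ((2:ℝ)^(-(r:ℝ)))^e * |α| ^ e := by
          rw [Real.mul_rpow (by norm_num) (by positivity),
            Real.mul_rpow (by positivity) (abs_nonneg α)]; ring
  have hT : ((2:ℝ)^(-(r:ℝ)))^e = (2:ℝ)^(-(r:ℝ)*(k:ℝ)/2) := by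
    rw [← Real.rpow_mul (by norm_num : (0:ℝ) ≤ 2)]
    congr 1; rw [he]; ring
  have h2e : (2:ℝ)^e * (2:ℝ)^e = (2:ℝ)^(k:ℝ) := by
    rw [← Real.rpow_add (by norm_num : (0:ℝ) < 2)]; congr 1; rw [he]; ring
  have hP : |α| ^ e ≠ 0 := by positivity
  calc C * a = (2:ℝ) ^ e * a ^ e / |α| ^ e := by
        rw [hC, show a ^ e = a ^ (e-1) * a by
          rw [← Real.rpow_add_one ha0.ne' (e-1)]; ring_nf]
        ring
    _ ≤ (2:ℝ) ^ e * ((2:ℝ)^e * ((2:ℝ)^(-(r:ℝ)))^e * |α|^e) / |α|^e := by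
        gcongr
    _ = (2:ℝ) ^ (k:ℝ) * (2:ℝ) ^ (-(r:ℝ)*(k:ℝ)/2) := by
        rw [hT, mul_div_assoc, mul_div_assoc, div_self hP, mul_one, ← mul_assoc, h2e]
end
end

section
/- Let k ≥ 1 and let Q(x) = (1/2) xᵗ A x be a positive definite integral quadratic form in k variables with adjoint form Q*. Then for every y > 0, every θ ∈ ℝ and every η ∈ ℝ^k, ∫_{ℝ^k} e^{−2π Q*(φ)/(y + iθ)} e^{−2πi φ·η} dφ = (det A)^{1/2} (y + iθ)^{k/2} e^{−2π Q(η)(y + iθ)}, where the integrand is absolutely integrable. -/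
open Matrix MeasureTheory

noncomputable section

/-- the Fourier transform of the complex Gaussian attached to the adjoint form:
`∫_{ℝ^k} e^{-2π Q*(φ)/(y+iθ)} e^{-2πi φ·η} dφ = (det A)^{1/2} (y+iθ)^{k/2} e^{-2π Q(η)(y+iθ)}`. -/
theorem gaussian_fourier_transform
    (k : ℕ) (hk : 1 ≤ k)
    (A : Matrix (Fin k) (Fin k) ℤ)
    (hAsymm : A.IsSymm)
    (hApos : (A.map ((↑) : ℤ → ℝ)).PosDef)
    (hAeven : ∀ i, 2 ∣ A i i)
    (Q : (Fin k → ℤ) → ℤ)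
    (hQ : ∀ x, 2 * Q x = x ⬝ᵥ A.mulVec x)
    (Qstar : (Fin k → ℝ) → ℝ)
    (hQstar : ∀ x, Qstar x = (1 / 2) * (x ⬝ᵥ ((A.map ((↑) : ℤ → ℝ))⁻¹).mulVec x))
    (QR : (Fin k → ℝ) → ℝ)
    (hQR : ∀ x, QR x = (1 / 2) * (x ⬝ᵥ (A.map ((↑) : ℤ → ℝ)).mulVec x))
    (y : ℝ) (hy : 0 < y) (θ : ℝ) (η : Fin k → ℝ) :
    Integrable (fun φ : Fin k → ℝ =>
      Complex.exp ((-2 : ℂ) * Real.pi * ((Qstar φ : ℝ) : ℂ) / ((y : ℂ) + Complex.I * (θ : ℝ))) *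
        Complex.exp ((-2 : ℂ) * Real.pi * Complex.I * ((φ ⬝ᵥ η : ℝ) : ℂ))) volume ∧
    (∫ φ : Fin k → ℝ,
        Complex.exp ((-2 : ℂ) * Real.pi * ((Qstar φ : ℝ) : ℂ) /
            ((y : ℂ) + Complex.I * (θ : ℝ))) *
          Complex.exp ((-2 : ℂ) * Real.pi * Complex.I * ((φ ⬝ᵥ η : ℝ) : ℂ)))
      = (Real.sqrt (A.det : ℝ) : ℂ) * ((y : ℂ) + Complex.I * (θ : ℝ)) ^ ((k : ℂ) / 2) *
          Complex.exp ((-2 : ℂ) * Real.pi * ((QR η : ℝ) : ℂ) *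
            ((y : ℂ) + Complex.I * (θ : ℝ))) := by
  set B : Matrix (Fin k) (Fin k) ℝ := A.map ((↑) : ℤ → ℝ) with hBdef
  set N : Matrix (Fin k) (Fin k) ℝ := (open scoped MatrixOrder Matrix.Norms.L2Operator in CFC.sqrt B) with hNdef
  have hNps : N.PosSemidef := (open scoped MatrixOrder Matrix.Norms.L2Operator in (CFC.sqrt_nonneg B).posSemidef)
  have hNN : N * N = B := (open scoped MatrixOrder Matrix.Norms.L2Operator in CFC.sqrt_mul_sqrt_self B hApos.posSemidef.nonneg)
  have hNsymm : Nᵀ = N := by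
    have := hNps.1
    simpa [Matrix.IsHermitian] using this
  have hBdet : B.det = (A.det : ℝ) := by
    rw [hBdef]; exact (RingHom.map_det (Int.castRingHom ℝ) A).symm
  have hBdetpos : 0 < B.det := hApos.det_pos
  have hNdet_sq : N.det * N.det = B.det := by rw [← det_mul, hNN]
  have hNdet_nonneg : 0 ≤ N.det := by
    rw [hNps.1.det_eq_prod_eigenvalues]
    exact Finset.prod_nonneg fun i _ => hNps.eigenvalues_nonneg i
  have hNdet0 : N.det ≠ 0 := by
    intro h; rw [h, mul_zero] at hNdet_sq; exact hBdetpos.ne hNdet_sq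
  have hNdet : N.det = Real.sqrt (A.det : ℝ) := by
    rw [← hBdet, ← hNdet_sq, Real.sqrt_mul_self hNdet_nonneg]
  have hNunit : IsUnit N.det := isUnit_iff_ne_zero.mpr hNdet0
  have hNBN : N * (B⁻¹ * N) = 1 := by
    rw [← hNN, Matrix.mul_inv_rev, ← Matrix.mul_assoc, ← Matrix.mul_assoc,
      Matrix.mul_nonsing_inv _ hNunit, Matrix.one_mul, Matrix.nonsing_inv_mul _ hNunit]
  have hmv : ∀ ψ : Fin k → ℝ, N *ᵥ ψ = ψ ᵥ* N := by
    intro ψ; rw [← hNsymm, mulVec_transpose, hNsymm]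
  have key5 : ∀ ψ : Fin k → ℝ, (N *ᵥ ψ) ⬝ᵥ B⁻¹ *ᵥ (N *ᵥ ψ) = ψ ⬝ᵥ ψ := by
    intro ψ
    rw [mulVec_mulVec, dotProduct_mulVec, hmv, vecMul_vecMul, hNBN, vecMul_one]
  have key6 : ∀ ψ : Fin k → ℝ, (N *ᵥ ψ) ⬝ᵥ η = ψ ⬝ᵥ (N *ᵥ η) := by
    intro ψ
    rw [hmv ψ, ← dotProduct_mulVec]
  have key7 : (N *ᵥ η) ⬝ᵥ (N *ᵥ η) = η ⬝ᵥ B *ᵥ η := by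
    rw [hmv η, ← dotProduct_mulVec, mulVec_vecMul, hNsymm, hNN]
  -- analytic setup
  set w : ℂ := (y : ℂ) + Complex.I * (θ : ℝ) with hwdef
  have hwre : w.re = y := by simp [hwdef]
  have hw0 : w ≠ 0 := fun h => by simp [h] at hwre; exact hy.ne' hwre.symm
  set b : ℂ := (Real.pi : ℂ) / w with hbdef
  have hb : 0 < b.re := by
    rw [hbdef, Complex.div_re, hwre]
    have hns : 0 < Complex.normSq w := Complex.normSq_pos.mpr hw0
    have h1 : 0 < Real.pi * y / Complex.normSq w := by positivity
    simpa using h1.trans_le (by simp [le_refl])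
  have hb0 : b ≠ 0 := fun h => by simp [h] at hb
  set c : Fin k → ℂ := fun i => (-2 : ℂ) * Real.pi * Complex.I * ((N *ᵥ η) i) with hcdef
  set f : (Fin k → ℝ) → ℂ := fun φ =>
      Complex.exp ((-2 : ℂ) * Real.pi * ((Qstar φ : ℝ) : ℂ) / w) *
        Complex.exp ((-2 : ℂ) * Real.pi * Complex.I * ((φ ⬝ᵥ η : ℝ) : ℂ)) with hfdef
  have key : ∀ ψ : Fin k → ℝ,
      f (N *ᵥ ψ) = Complex.exp (-b * ∑ i, (ψ i : ℂ) ^ 2 + ∑ i, c i * ψ i) := by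
    intro ψ
    have h1 : ((ψ ⬝ᵥ ψ : ℝ) : ℂ) = ∑ i, (ψ i : ℂ) ^ 2 := by
      push_cast [dotProduct]; exact Finset.sum_congr rfl fun i _ => (sq _).symm
    have h2 : ((ψ ⬝ᵥ (N *ᵥ η) : ℝ) : ℂ) = ∑ i, ((N *ᵥ η) i : ℂ) * (ψ i : ℂ) := by
      push_cast [dotProduct]; exact Finset.sum_congr rfl fun i _ => mul_comm _ _
    have e1 : -b * (∑ i, (ψ i : ℂ) ^ 2)
        = (-2 : ℂ) * Real.pi * (((1 / 2) * (ψ ⬝ᵥ ψ) : ℝ) : ℂ) / w := by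
      rw [← h1, hbdef]; push_cast; field_simp
    have e2 : ∑ i, c i * (ψ i : ℂ)
        = (-2 : ℂ) * Real.pi * Complex.I * ((ψ ⬝ᵥ (N *ᵥ η) : ℝ) : ℂ) := by
      rw [h2, Finset.mul_sum]
      refine Finset.sum_congr rfl fun i _ => by simp only [hcdef]; ring
    simp only [hfdef]
    rw [← Complex.exp_add]
    congr 1
    rw [hQstar, key5, key6, e1, e2]
  -- continuity / measurability of f
  have hfc : Continuous f := by
    have : f = fun φ : Fin k → ℝ =>
        Complex.exp ((-2 : ℂ) * Real.pi *
            ((((1 / 2) * (φ ⬝ᵥ B⁻¹ *ᵥ φ) : ℝ)) : ℂ) / w) *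
          Complex.exp ((-2 : ℂ) * Real.pi * Complex.I * ((φ ⬝ᵥ η : ℝ) : ℂ)) := by
      funext φ; simp only [hfdef]; rw [hQstar]
    rw [this]
    simp only [dotProduct, mulVec]
    fun_prop
  -- change of variables
  have hTm : Measurable (⇑(Matrix.toLin' N)) :=
    (LinearMap.continuous_of_finiteDimensional (Matrix.toLin' N)).measurable
  have hmap : Measure.map (⇑(Matrix.toLin' N)) volume
      = ENNReal.ofReal |N.det|⁻¹ • volume := by
    rw [← abs_inv]
    exact Real.map_matrix_volume_pi_eq_smul_volume_pi hNdet0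
  have hcomp : (f ∘ ⇑(Matrix.toLin' N))
      = fun ψ : Fin k → ℝ => Complex.exp (-b * ∑ i, (ψ i : ℂ) ^ 2 + ∑ i, c i * ψ i) := by
    funext ψ
    rw [Function.comp_apply, Matrix.toLin'_apply, key]
  have hint_g : Integrable
      (fun ψ : Fin k → ℝ => Complex.exp (-b * ∑ i, (ψ i : ℂ) ^ 2 + ∑ i, c i * ψ i)) volume :=
    GaussianFourier.integrable_cexp_neg_mul_sum_add hb c
  have hint_f : Integrable f volume := by
    have h2 : Integrable f (Measure.map (⇑(Matrix.toLin' N)) volume) := by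
      rw [integrable_map_measure hfc.aestronglyMeasurable hTm.aemeasurable, hcomp]
      exact hint_g
    rw [hmap] at h2
    refine (integrable_smul_measure ?_ ENNReal.ofReal_ne_top).mp h2
    simp [ENNReal.ofReal_eq_zero, not_le, hNdet0, abs_pos]
  refine ⟨hint_f, ?_⟩
  -- compute the integral
  have hvol : (volume : Measure (Fin k → ℝ))
      = ENNReal.ofReal |N.det| • Measure.map (⇑(Matrix.toLin' N)) volume := by
    rw [hmap, smul_smul, ← ENNReal.ofReal_mul (abs_nonneg _),
      mul_inv_cancel₀ (abs_ne_zero.mpr hNdet0), ENNReal.ofReal_one, one_smul]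
  have hstep : (∫ φ : Fin k → ℝ, f φ)
      = |N.det| • ∫ ψ : Fin k → ℝ, f (Matrix.toLin' N ψ) := by
    conv_lhs => rw [hvol]
    rw [integral_smul_measure, integral_map hTm.aemeasurable hfc.aestronglyMeasurable,
      ENNReal.toReal_ofReal (abs_nonneg _)]
  have hgauss : (∫ ψ : Fin k → ℝ, f (Matrix.toLin' N ψ))
      = ((Real.pi : ℂ) / b) ^ ((Fintype.card (Fin k) : ℂ) / 2)
        * Complex.exp ((∑ i, c i ^ 2) / (4 * b)) := by
    have := congrFun hcomp
    simp only [Function.comp_apply] at this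
    simp_rw [this]
    exact GaussianFourier.integral_cexp_neg_mul_sum_add hb c
  have hpib : (Real.pi : ℂ) / b = w := by
    rw [hbdef]
    field_simp
  have hcsq : (∑ i, c i ^ 2) / (4 * b) = (-2 : ℂ) * Real.pi * ((QR η : ℝ) : ℂ) * w := by
    have hx : ((N *ᵥ η) ⬝ᵥ (N *ᵥ η) : ℝ) = 2 * QR η := by
      rw [key7, hQR]; ring
    have h1 : ((((N *ᵥ η) ⬝ᵥ (N *ᵥ η)) : ℝ) : ℂ) = ∑ i, (((N *ᵥ η) i : ℝ) : ℂ) ^ 2 := by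
      push_cast [dotProduct]; exact Finset.sum_congr rfl fun i _ => (sq _).symm
    have h3 : (∑ i, c i ^ 2)
        = (-4 : ℂ) * (Real.pi : ℂ) ^ 2 * ((((N *ᵥ η) ⬝ᵥ (N *ᵥ η) : ℝ)) : ℂ) := by
      rw [h1, Finset.mul_sum]
      refine Finset.sum_congr rfl fun i _ => ?_
      simp only [hcdef]
      rw [mul_pow, mul_pow, Complex.I_sq]
      ring
    rw [h3, hx, hbdef]
    push_cast
    field_simp [Complex.ofReal_ne_zero.mpr Real.pi_ne_zero]
  rw [hstep, hgauss, hpib, hcsq, Fintype.card_fin, hNdet]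
  rw [abs_of_nonneg (Real.sqrt_nonneg _), Complex.real_smul]
  ring
end
end
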